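/- arXiv:1512.02317 — 4 statements merged into one kernel-verified Lean document; each statement's English description precedes it below -/
import Mathlib

section
/- For any real weights λ, μ > 0 there exists an integer m₀ such that for all m ≥ m₀ the star is the unique minimizer of λπ(G) + μτ(G) over all connected directed graphs G on {1,…,m}: that is, for every connected directed graph G on m vertices not isomorphic to a star, 4λ + 2μ < λπ(G) + μτ(G). -/
open scoped Classical

namespace Money

/-- A finite simple directed graph without loops, on a subset of `Fin n`. -/
structure Digraph (n : ℕ) where
  verts : Finset (Fin n)
  edges : Finset (Fin n × Fin n)
  mem_verts : ∀ e ∈ edges, e.1 ∈ verts ∧ e.2 ∈ verts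
  no_loops : ∀ e ∈ edges, e.1 ≠ e.2

namespace Digraph

variable {n : ℕ}

/-- There is a directed path (possibly empty) from `i` to `j`. -/
def Reaches (G : Digraph n) : Fin n → Fin n → Prop :=
  Relation.ReflTransGen fun a b => (a, b) ∈ G.edges

/-- `G` is connected: nonempty, and any vertex reaches any other by a directed path. -/
def Connected (G : Digraph n) : Prop :=
  G.verts.Nonempty ∧ ∀ i ∈ G.verts, ∀ j ∈ G.verts, G.Reaches i j

/-- `T` is (the edge set of) a spanning `i`-tree of `G`: every vertex `j ≠ i`
has a unique directed path in `T` to `i`. -/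
def IsSpanTree (G : Digraph n) (i : Fin n) (T : Finset (Fin n × Fin n)) : Prop :=
  T ⊆ G.edges ∧
  (∀ j ∈ G.verts, j ≠ i → ∃! k, (j, k) ∈ T) ∧
  (∀ k, (i, k) ∉ T) ∧
  ∀ j ∈ G.verts, Relation.ReflTransGen (fun a b => (a, b) ∈ T) j i

/-- The spanning-tree price of vertex `i` at edge weights `b`. -/
noncomputable def price (G : Digraph n) (i : Fin n) (b : Fin n × Fin n → ℝ) : ℝ :=
  ∑ T ∈ G.edges.powerset.filter (fun T => G.IsSpanTree i T), ∏ e ∈ T, b e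

/-- The price-ratio function `b ↦ p_i(b)/p_j(b)`. -/
noncomputable def priceRatio (G : Digraph n) (i j : Fin n) (b : Fin n × Fin n → ℝ) : ℝ :=
  G.price i b / G.price j b

/-- An edge coordinate `e` is influential for `f` (as a function on positive
weight vectors on the edges of `G`). -/
def Influential (G : Digraph n) (f : (Fin n × Fin n → ℝ) → ℝ) (e : Fin n × Fin n) : Prop :=
  ∃ b b' : Fin n × Fin n → ℝ,
    (∀ e' ∈ G.edges, 0 < b e') ∧ (∀ e' ∈ G.edges, 0 < b' e') ∧
    (∀ e', e' ≠ e → b e' = b' e') ∧ f b ≠ f b'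

/-- `π_ij(G)`: the number of influential edges of the price-ratio `p_i/p_j`. -/
noncomputable def priceCplxPair (G : Digraph n) (i j : Fin n) : ℕ :=
  (G.edges.filter (fun e => G.Influential (G.priceRatio i j) e)).card

/-- The price complexity `π(G) = max_{i ≠ j} π_ij(G)`. -/
noncomputable def priceComplexity (G : Digraph n) : ℕ :=
  ((G.verts ×ˢ G.verts).filter fun p => p.1 ≠ p.2).sup fun p => G.priceCplxPair p.1 p.2

/-- There is a directed walk of length `k` from `i` to `j`. -/
def HasWalk (G : Digraph n) (i j : Fin n) (k : ℕ) : Prop :=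
  ∃ g : ℕ → Fin n, g 0 = i ∧ g k = j ∧ ∀ t < k, (g t, g (t + 1)) ∈ G.edges

/-- Length of a shortest directed path from `i` to `j`. -/
noncomputable def dist (G : Digraph n) (i j : Fin n) : ℕ := sInf {k | G.HasWalk i j k}

/-- The time complexity `τ(G)`: the diameter of `G`. -/
noncomputable def timeComplexity (G : Digraph n) : ℕ :=
  ((G.verts ×ˢ G.verts).filter fun p => p.1 ≠ p.2).sup fun p => G.dist p.1 p.2

def outdeg (G : Digraph n) (v : Fin n) : ℕ := (G.edges.filter fun e => e.1 = v).card

def indeg (G : Digraph n) (v : Fin n) : ℕ := (G.edges.filter fun e => e.2 = v).card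

/-- A directed cycle: connected, and every vertex has exactly one outgoing
and one incoming edge. -/
def IsCycleGraph (G : Digraph n) : Prop :=
  G.Connected ∧ ∀ v ∈ G.verts, G.outdeg v = 1 ∧ G.indeg v = 1

/-- `P` is a (simple) directed path from `s` to `t`, `s ≠ t`. -/
def IsPathGraph (P : Digraph n) (s t : Fin n) : Prop :=
  s ≠ t ∧ s ∈ P.verts ∧ t ∈ P.verts ∧
  (∀ v ∈ P.verts, P.Reaches s v ∧ P.Reaches v t) ∧
  (∀ v ∈ P.verts, v ≠ t → P.outdeg v = 1) ∧ P.outdeg t = 0 ∧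
  (∀ v ∈ P.verts, v ≠ s → P.indeg v = 1) ∧ P.indeg s = 0

/-- Union of two digraphs. -/
def union (G H : Digraph n) : Digraph n where
  verts := G.verts ∪ H.verts
  edges := G.edges ∪ H.edges
  mem_verts := by
    intro e he
    rcases Finset.mem_union.mp he with h | h
    · exact ⟨Finset.mem_union_left _ (G.mem_verts e h).1,
        Finset.mem_union_left _ (G.mem_verts e h).2⟩
    · exact ⟨Finset.mem_union_right _ (H.mem_verts e h).1,
        Finset.mem_union_right _ (H.mem_verts e h).2⟩
  no_loops := by
    intro e he
    rcases Finset.mem_union.mp he with h | h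
    · exact G.no_loops e h
    · exact H.no_loops e h

/-- A chorded cycle: a directed cycle `C` together with a directed path `P`
joining two distinct vertices of `C`, otherwise disjoint from `C`. -/
def IsChordedCycle (G : Digraph n) : Prop :=
  ∃ (C P : Digraph n) (s t : Fin n),
    C.IsCycleGraph ∧ P.IsPathGraph s t ∧ s ∈ C.verts ∧ t ∈ C.verts ∧
    P.verts ∩ C.verts = {s, t} ∧ Disjoint C.edges P.edges ∧ G = C.union P

/-- A `k`-rose: `k` directed cycles sharing a single common vertex, otherwise
pairwise disjoint.  A `0`-rose is a single vertex. -/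
def IsRose (G : Digraph n) (k : ℕ) : Prop :=
  ∃ (j : Fin n) (C : Fin k → Digraph n),
    (∀ i, (C i).IsCycleGraph) ∧ (∀ i, j ∈ (C i).verts) ∧
    (∀ i i', i ≠ i' → (C i).verts ∩ (C i').verts = {j}) ∧
    G.verts = insert j (Finset.univ.biUnion fun i => (C i).verts) ∧
    G.edges = Finset.univ.biUnion fun i => (C i).edges

/-- `H` is a subgraph of `G` (obtained by deleting some edges and vertices). -/
def IsSubgraph (H G : Digraph n) : Prop := H.verts ⊆ G.verts ∧ H.edges ⊆ G.edges

/-- The circuit rank `c(G) = e(G) - v(G) + 1`. -/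
def circuitRank (G : Digraph n) : ℤ := (G.edges.card : ℤ) - (G.verts.card : ℤ) + 1

/-- The edge `ij` is collapsible. -/
def Collapsible (G : Digraph n) (i j : Fin n) : Prop :=
  (i, j) ∈ G.edges ∧ G.outdeg i = 1 ∧ (j, i) ∉ G.edges ∧
  ∀ k, ¬((k, i) ∈ G.edges ∧ (k, j) ∈ G.edges)

/-- `G` is rigid: no collapsible edges. -/
def Rigid (G : Digraph n) : Prop := ∀ i j, ¬G.Collapsible i j

/-- `k` covers the ordinary vertex `i` (whose unique outgoing edge is `ij`). -/
def Covers (G : Digraph n) (k i : Fin n) : Prop :=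
  G.outdeg i = 1 ∧ ∃ j, (i, j) ∈ G.edges ∧
    (((k, i) ∈ G.edges ∧ (k, j) ∈ G.edges) ∨ (k = j ∧ (j, i) ∈ G.edges))

/-- A star on all of `Fin n`: a center joined to every other vertex by a pair
of oppositely directed edges, and no other edges. -/
def IsStar (G : Digraph n) : Prop :=
  ∃ c : Fin n, G.verts = Finset.univ ∧
    G.edges = Finset.univ.filter fun e => (e.1 = c ∧ e.2 ≠ c) ∨ (e.2 = c ∧ e.1 ≠ c)

/-- The complete directed graph on all of `Fin n`. -/
def IsComplete (G : Digraph n) : Prop :=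
  G.verts = Finset.univ ∧ G.edges = Finset.univ.filter fun e => e.1 ≠ e.2

/-- A chorded triangle: a 3-cycle `u → v → w → u` together with the
bidirected pair between `u` and `w`. -/
def IsChordedTriangle (T : Digraph n) : Prop :=
  ∃ u v w : Fin n, u ≠ v ∧ v ≠ w ∧ u ≠ w ∧
    T.verts = {u, v, w} ∧ T.edges = {(u, w), (w, u), (u, v), (v, w)}

namespace Aux

open Finset

variable {n : ℕ}

/-- Walk of length `k` from `i` to `j` using only edges in `E'`. -/
def WalkIn (E' : Finset (Fin n × Fin n)) (i j : Fin n) (k : ℕ) : Prop :=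
  ∃ g : ℕ → Fin n, g 0 = i ∧ g k = j ∧ ∀ t < k, (g t, g (t + 1)) ∈ E'

/-- Reachability using only edges in `E'`. -/
def ReachIn (E' : Finset (Fin n × Fin n)) : Fin n → Fin n → Prop :=
  Relation.ReflTransGen fun a b => (a, b) ∈ E'

lemma walkIn_refl (E' : Finset (Fin n × Fin n)) (i : Fin n) : WalkIn E' i i 0 :=
  ⟨fun _ => i, rfl, rfl, fun t ht => absurd ht (Nat.not_lt_zero t)⟩

lemma walkIn_zero {E' : Finset (Fin n × Fin n)} {i j : Fin n} (h : WalkIn E' i j 0) : i = j := by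
  obtain ⟨g, h0, hk, _⟩ := h; rw [← h0, hk]

lemma WalkIn.head {E' : Finset (Fin n × Fin n)} {i j y : Fin n} {k : ℕ}
    (hij : (i, y) ∈ E') (h : WalkIn E' y j k) : WalkIn E' i j (k + 1) := by
  obtain ⟨g, h0, hk, hs⟩ := h
  refine ⟨fun t => if t = 0 then i else g (t - 1), by simp, by simp [hk], ?_⟩
  intro t ht
  rcases Nat.eq_zero_or_pos t with rfl | hpos
  · simpa [h0] using hij
  · have h1 : ¬ (t = 0) := Nat.pos_iff_ne_zero.mp hpos
    have h2 : ¬ (t + 1 = 0) := by omega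
    simp only [h1, h2, if_false]
    have : t - 1 < k := by omega
    have := hs (t - 1) this
    have ht1 : t - 1 + 1 = t + 1 - 1 := by omega
    rwa [ht1] at this

lemma reachIn_iff_walkIn {E' : Finset (Fin n × Fin n)} {i j : Fin n} :
    ReachIn E' i j ↔ ∃ k, WalkIn E' i j k := by
  constructor
  · intro h
    induction h using Relation.ReflTransGen.head_induction_on with
    | refl => exact ⟨0, walkIn_refl E' j⟩
    | head hab _ ih => obtain ⟨k, hk⟩ := ih; exact ⟨k + 1, WalkIn.head hab hk⟩
  · rintro ⟨k, hk⟩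
    induction k generalizing i with
    | zero => rw [walkIn_zero hk]; exact Relation.ReflTransGen.refl
    | succ k ih =>
      obtain ⟨g, h0, hE, hs⟩ := hk
      have hedge : (i, g 1) ∈ E' := by rw [← h0]; exact hs 0 (Nat.succ_pos k)
      have hw : WalkIn E' (g 1) j k :=
        ⟨fun t => g (t + 1), rfl, hE, fun t ht => hs (t + 1) (by omega)⟩
      exact Relation.ReflTransGen.head hedge (ih hw)

lemma walkIn_mono {E' E'' : Finset (Fin n × Fin n)} (hE : E' ⊆ E'') {i j : Fin n} {k : ℕ}
    (h : WalkIn E' i j k) : WalkIn E'' i j k := by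
  obtain ⟨g, h0, hk, hs⟩ := h; exact ⟨g, h0, hk, fun t ht => hE (hs t ht)⟩

lemma reachIn_mono {E' E'' : Finset (Fin n × Fin n)} (hE : E' ⊆ E'') {i j : Fin n}
    (h : ReachIn E' i j) : ReachIn E'' i j :=
  Relation.ReflTransGen.mono (fun a b hab => hE hab) _ _ h

/-- The suffix of a walk, starting at position `s`. -/
lemma walkIn_suffix {E' : Finset (Fin n × Fin n)} {i j : Fin n} {k : ℕ}
    (g : ℕ → Fin n) (h0 : g 0 = i) (hk : g k = j) (hs : ∀ t < k, (g t, g (t + 1)) ∈ E')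
    (s : ℕ) (hsk : s ≤ k) : WalkIn E' (g s) j (k - s) := by
  refine ⟨fun t => g (t + s), by simp, ?_, ?_⟩
  · show g (k - s + s) = j
    rw [Nat.sub_add_cancel hsk, hk]
  intro t ht
  have := hs (t + s) (by omega)
  have he : t + s + 1 = t + 1 + s := by omega
  rwa [he] at this

end Aux
namespace Aux

open Finset

variable {n : ℕ}

/-- Remove all edges touching the vertex `k`. -/
def avoid (E' : Finset (Fin n × Fin n)) (k : Fin n) : Finset (Fin n × Fin n) :=
  E'.filter fun e => e.1 ≠ k ∧ e.2 ≠ k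

lemma avoid_subset (E' : Finset (Fin n × Fin n)) (k : Fin n) : avoid E' k ⊆ E' :=
  Finset.filter_subset _ _

lemma mem_avoid {E' : Finset (Fin n × Fin n)} {k : Fin n} {e : Fin n × Fin n} :
    e ∈ avoid E' k ↔ e ∈ E' ∧ e.1 ≠ k ∧ e.2 ≠ k := by
  simp [avoid]

/-- First-edge extraction: if `k ≠ i` reaches `i`, then some out-edge of `k`
leads to a vertex reaching `i` while avoiding `k` entirely. -/
lemma exists_first_edge {E' : Finset (Fin n × Fin n)} {k i : Fin n}
    (hki : k ≠ i) (h : ReachIn E' k i) :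
    ∃ y, (k, y) ∈ E' ∧ ReachIn (avoid E' k) y i := by
  have hne : {t | WalkIn E' k i t}.Nonempty := by
    obtain ⟨t, ht⟩ := reachIn_iff_walkIn.mp h; exact ⟨t, ht⟩
  obtain ⟨d, hmem, hmin⟩ : ∃ d, WalkIn E' k i d ∧ ∀ t, WalkIn E' k i t → d ≤ t :=
    ⟨sInf {t | WalkIn E' k i t}, Nat.sInf_mem hne, fun t ht => Nat.sInf_le ht⟩
  obtain ⟨g, h0, hkk, hs⟩ := hmem
  have hd0 : d ≠ 0 := by
    intro h0'
    exact hki (walkIn_zero (by rw [← h0']; exact ⟨g, h0, hkk, hs⟩))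
  have hnotk : ∀ t, 1 ≤ t → t ≤ d → g t ≠ k := by
    intro t h1 h2 hgt
    have hw : WalkIn E' k i (d - t) := by
      have := walkIn_suffix g h0 hkk hs t h2
      rwa [hgt] at this
    have := hmin _ hw
    omega
  refine ⟨g 1, by rw [← h0]; exact hs 0 (by omega), ?_⟩
  rw [reachIn_iff_walkIn]
  refine ⟨d - 1, fun t => g (t + 1), rfl, ?_, ?_⟩
  · show g (d - 1 + 1) = i
    have he : d - 1 + 1 = d := by omega
    rw [he]; exact hkk
  · intro t ht
    rw [mem_avoid]
    refine ⟨?_, hnotk (t + 1) (by omega) (by omega), hnotk (t + 1 + 1) (by omega) (by omega)⟩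
    have := hs (t + 1) (by omega)
    simpa using this

/-- Splicing a repeated vertex out of a walk. -/
lemma walkIn_splice {E' : Finset (Fin n × Fin n)} {i j : Fin n} {d s t : ℕ}
    (g : ℕ → Fin n) (h0 : g 0 = i) (hdj : g d = j) (hs : ∀ r < d, (g r, g (r + 1)) ∈ E')
    (hst : s < t) (htd : t ≤ d) (heq : g s = g t) :
    WalkIn E' i j (d - (t - s)) := by
  refine ⟨fun r => if r ≤ s then g r else g (r + (t - s)), ?_, ?_, ?_⟩
  · show (if 0 ≤ s then g 0 else g (0 + (t - s))) = i
    rw [if_pos (Nat.zero_le s)]; exact h0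
  · show (if d - (t - s) ≤ s then g (d - (t - s)) else g (d - (t - s) + (t - s))) = j
    by_cases hcase : d - (t - s) ≤ s
    · rw [if_pos hcase]
      have hseq : d - (t - s) = s := by omega
      have hds : t = d := by omega
      rw [hseq, heq, hds, hdj]
    · rw [if_neg hcase]
      have he : d - (t - s) + (t - s) = d := by omega
      rw [he, hdj]
  · intro r hr
    show (if r ≤ s then g r else g (r + (t - s)), if r + 1 ≤ s then g (r + 1) else g (r + 1 + (t - s))) ∈ E'
    by_cases h1 : r + 1 ≤ s
    · rw [if_pos h1, if_pos (by omega : r ≤ s)]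
      exact hs r (by omega)
    · by_cases h2 : r ≤ s
      · have hrs : r = s := by omega
        rw [if_pos h2, if_neg h1, hrs, heq]
        have he : s + 1 + (t - s) = t + 1 := by omega
        rw [he]
        have he2 : g t = g (s + (t - s)) := by congr 1; omega
        rw [he2]
        have he3 : s + (t - s) = t := by omega
        rw [he3]
        exact hs t (by omega)
      · rw [if_neg h2, if_neg h1]
        have he : r + 1 + (t - s) = r + (t - s) + 1 := by omega
        rw [he]
        exact hs (r + (t - s)) (by omega)

/-- If all vertices reaching `j` lie in `R`, some walk to `j` has length `< R.card`. -/
lemma exists_short_walk {E' : Finset (Fin n × Fin n)} {z j : Fin n}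
    (h : ReachIn E' z j) (R : Finset (Fin n))
    (hR : ∀ w, ReachIn E' w j → w ∈ R) :
    ∃ k, k + 1 ≤ R.card ∧ WalkIn E' z j k := by
  have hne : {t | WalkIn E' z j t}.Nonempty := by
    obtain ⟨t, ht⟩ := reachIn_iff_walkIn.mp h; exact ⟨t, ht⟩
  obtain ⟨d, hmem, hmin⟩ : ∃ d, WalkIn E' z j d ∧ ∀ t, WalkIn E' z j t → d ≤ t :=
    ⟨sInf {t | WalkIn E' z j t}, Nat.sInf_mem hne, fun t ht => Nat.sInf_le ht⟩
  obtain ⟨g, h0, hdj, hs⟩ := hmem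
  refine ⟨d, ?_, ⟨g, h0, hdj, hs⟩⟩
  have hinj : Set.InjOn g (Finset.range (d + 1)) := by
    intro a ha b hb hab
    simp only [Finset.coe_range, Set.mem_Iio] at ha hb
    by_contra hne'
    rcases Nat.lt_or_ge a b with hlt | hge
    · have hw := walkIn_splice g h0 hdj hs hlt (by omega) hab
      have := hmin _ hw
      omega
    · have hlt : b < a := by omega
      have hw := walkIn_splice g h0 hdj hs hlt (by omega) hab.symm
      have := hmin _ hw
      omega
  have hsub : ∀ a ∈ Finset.range (d + 1), g a ∈ R := by
    intro a ha
    simp only [Finset.mem_range] at ha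
    refine hR _ ?_
    rw [reachIn_iff_walkIn]
    exact ⟨d - a, walkIn_suffix g h0 hdj hs a (by omega)⟩
  calc d + 1 = (Finset.range (d + 1)).card := by simp
  _ ≤ R.card := Finset.card_le_card_of_injOn g hsub hinj

end Aux
namespace Aux

open Finset Money Money.Digraph

variable {n : ℕ}

/-- Shortest-path-tree construction: from any edge set `E' ⊆ G.edges` in which every
vertex reaches `i`, we can build a spanning `i`-tree of `G` inside `E'`. -/
lemma exists_spanTree_subset (G : Digraph n) (hv : G.verts = Finset.univ)
    {E' : Finset (Fin n × Fin n)} (hE' : E' ⊆ G.edges) (i : Fin n)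
    (hreach : ∀ w, ReachIn E' w i) :
    ∃ T, G.IsSpanTree i T ∧ T ⊆ E' := by
  classical
  obtain ⟨dd, hmem, hmin⟩ : ∃ dd : Fin n → ℕ,
      (∀ w, WalkIn E' w i (dd w)) ∧ (∀ w t, WalkIn E' w i t → dd w ≤ t) := by
    refine ⟨fun w => sInf {k | WalkIn E' w i k}, fun w => ?_,
      fun w t ht => Nat.sInf_le ht⟩
    have hne : {k | WalkIn E' w i k}.Nonempty := by
      obtain ⟨t, ht⟩ := reachIn_iff_walkIn.mp (hreach w); exact ⟨t, ht⟩
    show WalkIn E' w i (sInf {k | WalkIn E' w i k})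
    exact Nat.sInf_mem hne
  have hstep : ∀ w, w ≠ i → ∃ y, (w, y) ∈ E' ∧ dd y < dd w := by
    intro w hwi
    obtain ⟨g, h0, hk, hs⟩ := hmem w
    have hd0 : dd w ≠ 0 := by
      intro h0'
      exact hwi (walkIn_zero (by rw [← h0']; exact ⟨g, h0, hk, hs⟩))
    refine ⟨g 1, by rw [← h0]; exact hs 0 (by omega), ?_⟩
    have hsuf : WalkIn E' (g 1) i (dd w - 1) := walkIn_suffix g h0 hk hs 1 (by omega)
    have := hmin _ _ hsuf
    omega
  set f : Fin n → Fin n := fun w =>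
    if h : w = i then i else Classical.choose (hstep w h) with hf
  have hfE : ∀ w (hwi : w ≠ i), (w, f w) ∈ E' ∧ dd (f w) < dd w := by
    intro w hwi
    have : f w = Classical.choose (hstep w hwi) := by rw [hf]; simp [hwi]
    rw [this]
    exact Classical.choose_spec (hstep w hwi)
  set T : Finset (Fin n × Fin n) :=
    (Finset.univ.filter (fun w => w ≠ i)).image (fun w => (w, f w)) with hT
  have hmemT : ∀ e, e ∈ T ↔ e.1 ≠ i ∧ e.2 = f e.1 := by
    intro e
    rw [hT]
    simp only [Finset.mem_image, Finset.mem_filter, Finset.mem_univ, true_and]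
    constructor
    · rintro ⟨w, hw, rfl⟩; exact ⟨hw, rfl⟩
    · rintro ⟨h1, h2⟩; exact ⟨e.1, h1, by rw [← h2]⟩
  have hTE' : T ⊆ E' := by
    intro e he
    rw [hmemT] at he
    obtain ⟨h1, h2⟩ := he
    have := (hfE e.1 h1).1
    rwa [← h2] at this
  refine ⟨T, ⟨hTE'.trans hE', ?_, ?_, ?_⟩, hTE'⟩
  · intro j _ hji
    refine ⟨f j, ?_, ?_⟩
    · show (j, f j) ∈ T
      rw [hmemT (j, f j)]; exact ⟨hji, rfl⟩
    · intro y hy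
      have hy' : (j, y) ∈ T := hy
      rw [hmemT (j, y)] at hy'
      exact hy'.2
  · intro k hk
    rw [hmemT (i, k)] at hk
    exact hk.1 rfl
  · intro j _
    have : ∀ N, ∀ w, dd w ≤ N → Relation.ReflTransGen (fun a b => (a, b) ∈ T) w i := by
      intro N
      induction N with
      | zero =>
        intro w hw
        have h0 : WalkIn E' w i 0 := by
          have := hmem w
          rwa [Nat.le_zero.mp hw] at this
        rw [walkIn_zero h0]
      | succ N ih =>
        intro w hw
        by_cases hwi : w = i
        · rw [hwi]
        · obtain ⟨hwe, hlt⟩ := hfE w hwi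
          have hTm : (w, f w) ∈ T := by rw [hmemT (w, f w)]; exact ⟨hwi, rfl⟩
          exact Relation.ReflTransGen.head hTm (ih (f w) (by omega))
    exact this (dd j) j le_rfl

/-- Every connected graph on all of `Fin n` has a spanning `i`-tree. -/
lemma exists_spanTree (G : Digraph n) (hv : G.verts = Finset.univ)
    (hc : G.Connected) (i : Fin n) : ∃ T, G.IsSpanTree i T := by
  obtain ⟨T, h1, _⟩ := exists_spanTree_subset G hv (le_refl G.edges) i
    (fun w => hc.2 w (by rw [hv]; exact Finset.mem_univ w) i (by rw [hv]; exact Finset.mem_univ i))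
  exact ⟨T, h1⟩

/-- Forced-edge spanning tree: if `(k,l)` is an edge, `k ≠ i` and `l` reaches `i`
avoiding `k`, then there is a spanning `i`-tree through `(k,l)`. -/
lemma exists_spanTree_through (G : Digraph n) (hv : G.verts = Finset.univ)
    (hc : G.Connected) {k l i : Fin n} (hkl : (k, l) ∈ G.edges) (hki : k ≠ i)
    (hr : ReachIn (avoid G.edges k) l i) :
    ∃ T, G.IsSpanTree i T ∧ (k, l) ∈ T := by
  classical
  set E' : Finset (Fin n × Fin n) :=
    G.edges.filter (fun e => e.1 ≠ k ∨ e = (k, l)) with hE'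
  have hsub : E' ⊆ G.edges := Finset.filter_subset _ _
  have havoid : avoid G.edges k ⊆ E' := by
    intro e he
    rw [mem_avoid] at he
    rw [hE', Finset.mem_filter]
    exact ⟨he.1, Or.inl he.2.1⟩
  have hklE' : (k, l) ∈ E' := by
    rw [hE', Finset.mem_filter]; exact ⟨hkl, Or.inr rfl⟩
  have hlreach : ReachIn E' l i := reachIn_mono havoid hr
  have hkreach : ReachIn E' k i := Relation.ReflTransGen.head hklE' hlreach
  have hreach : ∀ w, ReachIn E' w i := by
    intro w
    have hw : G.Reaches w i :=
      hc.2 w (by rw [hv]; exact Finset.mem_univ w) i (by rw [hv]; exact Finset.mem_univ i)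
    induction hw using Relation.ReflTransGen.head_induction_on with
    | refl => exact Relation.ReflTransGen.refl
    | @head a c hac _ ih =>
      by_cases hak : a = k
      · rw [hak]; exact hkreach
      · refine Relation.ReflTransGen.head ?_ ih
        rw [hE', Finset.mem_filter]
        exact ⟨hac, Or.inl hak⟩
  obtain ⟨T, hT, hTE'⟩ := exists_spanTree_subset G hv hsub i hreach
  refine ⟨T, hT, ?_⟩
  obtain ⟨-, huniq, -, -⟩ := hT
  obtain ⟨y, hy, -⟩ := huniq k (by rw [hv]; exact Finset.mem_univ k) hki
  have hyE' : (k, y) ∈ E' := hTE' hy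
  rw [hE', Finset.mem_filter] at hyE'
  rcases hyE'.2 with h | h
  · exact absurd rfl h
  · have : y = l := by
      have := congrArg Prod.snd h
      simpa using this
    rwa [this] at hy

/-- Orbit argument: any edge `(k,l)` of a spanning `i`-tree admits a path from `l`
to `i` avoiding `k` (inside `G`). -/
lemma spanTree_mem_reach (G : Digraph n) (hv : G.verts = Finset.univ)
    {i : Fin n} {T : Finset (Fin n × Fin n)} (hT : G.IsSpanTree i T)
    {k l : Fin n} (hkl : (k, l) ∈ T) :
    ReachIn (avoid G.edges k) l i := by
  classical
  obtain ⟨hTE, huniq, hiout, hreach⟩ := hT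
  have hki : k ≠ i := by
    intro h; rw [h] at hkl; exact hiout l hkl
  set g : Fin n → Fin n := fun w =>
    if h : ∃ y, (w, y) ∈ T then Classical.choose h else w with hg
  have hgspec : ∀ w y, (w, y) ∈ T → g w = y := by
    intro w y hwy
    have hex : ∃ y, (w, y) ∈ T := ⟨y, hwy⟩
    have hgw : g w = Classical.choose hex := by rw [hg]; simp [hex]
    have hmem : (w, Classical.choose hex) ∈ T := Classical.choose_spec hex
    have hwi : w ≠ i := by
      intro h; rw [h] at hwy; exact hiout y hwy
    obtain ⟨z, -, hz⟩ := huniq w (by rw [hv]; exact Finset.mem_univ w) hwi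
    rw [hgw, hz _ hmem, hz _ hwy]
  have hout : ∀ w, w ≠ i → (w, g w) ∈ T := by
    intro w hwi
    obtain ⟨z, hz, -⟩ := huniq w (by rw [hv]; exact Finset.mem_univ w) hwi
    rw [hgspec w z hz]; exact hz
  have horbit : ∀ w, Relation.ReflTransGen (fun a b => (a, b) ∈ T) w i →
      ∃ N, g^[N] w = i := by
    intro w hw
    induction hw using Relation.ReflTransGen.head_induction_on with
    | refl => exact ⟨0, rfl⟩
    | @head a c hac _ ih =>
      obtain ⟨N, hN⟩ := ih
      refine ⟨N + 1, ?_⟩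
      rw [Function.iterate_succ_apply, hgspec a c hac, hN]
  have hlr : Relation.ReflTransGen (fun a b => (a, b) ∈ T) l i :=
    hreach l (by rw [hv]; exact Finset.mem_univ l)
  have hne : {N | g^[N] l = i}.Nonempty := horbit l hlr
  obtain ⟨d, hdmem, hdmin⟩ : ∃ d, g^[d] l = i ∧ ∀ t, g^[t] l = i → d ≤ t :=
    ⟨sInf {N | g^[N] l = i}, Nat.sInf_mem hne, fun t ht => Nat.sInf_le ht⟩
  have hnotk : ∀ t, t < d → g^[t] l ≠ k := by
    intro t ht hgt
    have h1 : g^[t + 1] l = l := by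
      rw [Function.iterate_succ_apply', hgt, hgspec k l hkl]
    have h2 : g^[d] l = g^[d - (t + 1)] l := by
      have : d = d - (t + 1) + (t + 1) := by omega
      conv_lhs => rw [this]
      rw [Function.iterate_add_apply, h1]
    rw [hdmem] at h2
    have := hdmin _ h2.symm
    omega
  have hnoti : ∀ t, t < d → g^[t] l ≠ i := by
    intro t ht hgt
    have := hdmin _ hgt
    omega
  rw [reachIn_iff_walkIn]
  refine ⟨d, fun t => g^[t] l, rfl, hdmem, ?_⟩
  intro t ht
  rw [mem_avoid]
  have hTm : (g^[t] l, g^[t + 1] l) ∈ T := by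
    rw [Function.iterate_succ_apply']
    exact hout _ (hnoti t ht)
  refine ⟨hTE hTm, hnotk t ht, ?_⟩
  show g^[t + 1] l ≠ k
  by_cases h : t + 1 < d
  · exact hnotk _ h
  · have : t + 1 = d := by omega
    rw [this, hdmem]
    exact fun hik => hki hik.symm

end Aux
namespace Aux

open Finset Money Money.Digraph

variable {n : ℕ}

/-- The finset of spanning `i`-trees. -/
noncomputable def treeSet (G : Digraph n) (i : Fin n) : Finset (Finset (Fin n × Fin n)) :=
  G.edges.powerset.filter (fun T => G.IsSpanTree i T)

lemma mem_treeSet {G : Digraph n} {i : Fin n} {T : Finset (Fin n × Fin n)} :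
    T ∈ treeSet G i ↔ G.IsSpanTree i T := by
  simp only [treeSet, Finset.mem_filter, Finset.mem_powerset]
  exact ⟨fun h => h.2, fun h => ⟨h.1, h⟩⟩

lemma treeSet_nonempty (G : Digraph n) (hv : G.verts = Finset.univ) (hc : G.Connected)
    (i : Fin n) : 1 ≤ (treeSet G i).card := by
  obtain ⟨T, hT⟩ := exists_spanTree G hv hc i
  exact Finset.card_pos.mpr ⟨T, mem_treeSet.mpr hT⟩

lemma price_ones (G : Digraph n) (i : Fin n) :
    G.price i (fun _ => 1) = ((treeSet G i).card : ℝ) := by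
  unfold Digraph.price
  rw [show G.edges.powerset.filter (fun T => G.IsSpanTree i T) = treeSet G i from rfl]
  rw [Finset.sum_congr rfl (fun T _ => Finset.prod_const_one)]
  simp

lemma price_two (G : Digraph n) (i : Fin n) (e : Fin n × Fin n) :
    G.price i (fun e' => if e' = e then 2 else 1) =
      ((treeSet G i).card : ℝ) + (((treeSet G i).filter (fun T => e ∈ T)).card : ℝ) := by
  unfold Digraph.price
  rw [show G.edges.powerset.filter (fun T => G.IsSpanTree i T) = treeSet G i from rfl]
  have hprod : ∀ T ∈ treeSet G i,
      (∏ e' ∈ T, (if e' = e then (2:ℝ) else 1)) = if e ∈ T then 2 else 1 := by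
    intro T _
    exact Finset.prod_ite_eq' T e (fun _ => (2:ℝ))
  rw [Finset.sum_congr rfl hprod]
  have : ∀ T ∈ treeSet G i, (if e ∈ T then (2:ℝ) else 1) = 1 + (if e ∈ T then 1 else 0) := by
    intro T _
    by_cases h : e ∈ T <;> norm_num [h]
  rw [Finset.sum_congr rfl this, Finset.sum_add_distrib]
  simp [Finset.sum_boole]

/-- Core influence criterion via tree counts. -/
lemma influential_of_count (G : Digraph n) (hv : G.verts = Finset.univ) (hc : G.Connected)
    {i j : Fin n} (e : Fin n × Fin n)
    (hcount : ((treeSet G i).filter (fun T => e ∈ T)).card * (treeSet G j).card ≠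
      ((treeSet G j).filter (fun T => e ∈ T)).card * (treeSet G i).card) :
    G.Influential (G.priceRatio i j) e := by
  refine ⟨fun _ => 1, fun e' => if e' = e then 2 else 1, fun _ _ => one_pos, ?_, ?_, ?_⟩
  · intro e' _
    by_cases h : e' = e <;> simp [h]
  · intro e' he'
    simp [he']
  · set Ni := ((treeSet G i).card : ℝ) with hNi
    set Nj := ((treeSet G j).card : ℝ) with hNj
    set Ai := (((treeSet G i).filter (fun T => e ∈ T)).card : ℝ) with hAi
    set Aj := (((treeSet G j).filter (fun T => e ∈ T)).card : ℝ) with hAj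
    have hNi1 : 1 ≤ Ni := by
      rw [hNi]; exact_mod_cast treeSet_nonempty G hv hc i
    have hNj1 : 1 ≤ Nj := by
      rw [hNj]; exact_mod_cast treeSet_nonempty G hv hc j
    have hAi0 : 0 ≤ Ai := by rw [hAi]; positivity
    have hAj0 : 0 ≤ Aj := by rw [hAj]; positivity
    unfold Digraph.priceRatio
    rw [price_ones, price_ones, price_two, price_two]
    rw [← hNi, ← hNj, ← hAi, ← hAj]
    intro hEq
    rw [div_eq_div_iff (by linarith) (by linarith)] at hEq
    have hkey : Ai * Nj = Aj * Ni := by nlinarith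
    rw [hNi, hNj, hAi, hAj] at hkey
    exact hcount (by exact_mod_cast hkey)

/-- Certificate: some `i`-tree contains `e` but no `j`-tree does. -/
def CertA (G : Digraph n) (i j : Fin n) (e : Fin n × Fin n) : Prop :=
  (∃ T, G.IsSpanTree i T ∧ e ∈ T) ∧ (∀ T, G.IsSpanTree j T → e ∉ T)

lemma influential_of_certA (G : Digraph n) (hv : G.verts = Finset.univ) (hc : G.Connected)
    {i j : Fin n} (e : Fin n × Fin n)
    (h : CertA G i j e ∨ CertA G j i e) :
    G.Influential (G.priceRatio i j) e := by
  apply influential_of_count G hv hc e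
  rcases h with ⟨⟨T, hT, heT⟩, hnone⟩ | ⟨⟨T, hT, heT⟩, hnone⟩
  · have h1 : 1 ≤ ((treeSet G i).filter (fun T => e ∈ T)).card :=
      Finset.card_pos.mpr ⟨T, Finset.mem_filter.mpr ⟨mem_treeSet.mpr hT, heT⟩⟩
    have h2 : ((treeSet G j).filter (fun T => e ∈ T)).card = 0 := by
      rw [Finset.card_eq_zero, Finset.filter_eq_empty_iff]
      intro T' hT'
      exact hnone T' (mem_treeSet.mp hT')
    have h3 := treeSet_nonempty G hv hc j
    rw [h2, Nat.zero_mul]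
    positivity
  · have h1 : 1 ≤ ((treeSet G j).filter (fun T => e ∈ T)).card :=
      Finset.card_pos.mpr ⟨T, Finset.mem_filter.mpr ⟨mem_treeSet.mpr hT, heT⟩⟩
    have h2 : ((treeSet G i).filter (fun T => e ∈ T)).card = 0 := by
      rw [Finset.card_eq_zero, Finset.filter_eq_empty_iff]
      intro T' hT'
      exact hnone T' (mem_treeSet.mp hT')
    have h3 := treeSet_nonempty G hv hc i
    rw [h2, Nat.zero_mul]
    intro hEq
    have := Nat.mul_eq_zero.mp hEq.symm
    omega

/-- The two natural sources of certificates, phrased purely via reachability. -/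
lemma certA_of_reach (G : Digraph n) (hv : G.verts = Finset.univ) (hc : G.Connected)
    {k l i j : Fin n} (hkl : (k, l) ∈ G.edges) (hki : k ≠ i)
    (hr : ReachIn (avoid G.edges k) l i) (hnr : ¬ ReachIn (avoid G.edges k) l j) :
    CertA G i j (k, l) := by
  refine ⟨?_, ?_⟩
  · obtain ⟨T, hT, hm⟩ := exists_spanTree_through G hv hc hkl hki hr
    exact ⟨T, hT, hm⟩
  · intro T hT hm
    exact hnr (spanTree_mem_reach G hv hT hm)

lemma certA_own_out (G : Digraph n) (hv : G.verts = Finset.univ) (hc : G.Connected)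
    {i j y : Fin n} (hiy : (i, y) ∈ G.edges) (hij : i ≠ j)
    (hr : ReachIn (avoid G.edges i) y j) :
    CertA G j i (i, y) := by
  refine ⟨?_, ?_⟩
  · obtain ⟨T, hT, hm⟩ := exists_spanTree_through G hv hc hiy hij hr
    exact ⟨T, hT, hm⟩
  · intro T hT hm
    exact hT.2.2.1 y hm

/-- Lower bound on the price complexity from a finset of certified edges. -/
lemma le_priceComplexity (G : Digraph n) (hv : G.verts = Finset.univ) (hc : G.Connected)
    {i j : Fin n} (hij : i ≠ j) (S : Finset (Fin n × Fin n)) (hSE : S ⊆ G.edges)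
    (hcert : ∀ e ∈ S, CertA G i j e ∨ CertA G j i e) :
    S.card ≤ G.priceComplexity := by
  have h2 : S.card ≤ G.priceCplxPair i j := by
    unfold Digraph.priceCplxPair
    apply Finset.card_le_card
    intro e he
    rw [Finset.mem_filter]
    exact ⟨hSE he, influential_of_certA G hv hc e (hcert e he)⟩
  refine h2.trans ?_
  unfold Digraph.priceComplexity
  apply Finset.le_sup (b := ((i, j) : Fin n × Fin n))
    (f := fun p => G.priceCplxPair p.1 p.2)
  rw [Finset.mem_filter, Finset.mem_product, hv]
  exact ⟨⟨Finset.mem_univ i, Finset.mem_univ j⟩, hij⟩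

end Aux
namespace Aux

open Finset Money Money.Digraph

variable {n : ℕ}

/-- Out-neighbourhood as a finset. -/
noncomputable def Nout (G : Digraph n) (u : Fin n) : Finset (Fin n) :=
  Finset.univ.filter (fun y => (u, y) ∈ G.edges)

lemma mem_Nout {G : Digraph n} {u y : Fin n} : y ∈ Nout G u ↔ (u, y) ∈ G.edges := by
  simp [Nout]

lemma ne_of_mem_Nout {G : Digraph n} {u y : Fin n} (h : y ∈ Nout G u) : y ≠ u := by
  rw [mem_Nout] at h
  exact fun he => G.no_loops _ h (by simp [he])

lemma reaches_of_connected {G : Digraph n} (hv : G.verts = Finset.univ) (hc : G.Connected)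
    (i j : Fin n) : ReachIn G.edges i j :=
  hc.2 i (by rw [hv]; exact Finset.mem_univ i) j (by rw [hv]; exact Finset.mem_univ j)

lemma hasWalk_iff {G : Digraph n} {i j : Fin n} {k : ℕ} :
    G.HasWalk i j k ↔ WalkIn G.edges i j k := Iff.rfl

lemma exists_walk_dist {G : Digraph n} (hv : G.verts = Finset.univ) (hc : G.Connected)
    (i j : Fin n) : WalkIn G.edges i j (G.dist i j) := by
  have hne : {k | G.HasWalk i j k}.Nonempty := by
    obtain ⟨k, hk⟩ := reachIn_iff_walkIn.mp (reaches_of_connected hv hc i j)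
    exact ⟨k, hk⟩
  exact Nat.sInf_mem hne

lemma dist_pos {G : Digraph n} (hv : G.verts = Finset.univ) (hc : G.Connected)
    {i j : Fin n} (hij : i ≠ j) : 1 ≤ G.dist i j := by
  by_contra h
  have h0 : G.dist i j = 0 := by omega
  have := exists_walk_dist hv hc i j
  rw [h0] at this
  exact hij (walkIn_zero this)

lemma dist_le_time {G : Digraph n} (hv : G.verts = Finset.univ) {i j : Fin n} (hij : i ≠ j) :
    G.dist i j ≤ G.timeComplexity := by
  unfold Digraph.timeComplexity
  apply Finset.le_sup (b := ((i, j) : Fin n × Fin n)) (f := fun p => G.dist p.1 p.2)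
  rw [Finset.mem_filter, Finset.mem_product, hv]
  exact ⟨⟨Finset.mem_univ i, Finset.mem_univ j⟩, hij⟩

lemma time_pos {G : Digraph n} (hv : G.verts = Finset.univ) (hc : G.Connected)
    (hn : 2 ≤ n) : 1 ≤ G.timeComplexity := by
  have h0 : (0 : ℕ) < n := by omega
  have h1 : (1 : ℕ) < n := by omega
  have hne : (⟨0, h0⟩ : Fin n) ≠ ⟨1, h1⟩ := by
    intro h
    have := congrArg Fin.val h
    simp at this
  exact le_trans (dist_pos hv hc hne) (dist_le_time hv hne)

/-- Ball counting: the whole graph is contained in the `D`-ball of any vertex,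
so `n ≤ (d+1)^D` where `d` bounds all outdegrees. -/
lemma card_le_ball (G : Digraph n) (hv : G.verts = Finset.univ) (hc : G.Connected)
    (D : ℕ) (hdist : ∀ i j : Fin n, i ≠ j → G.dist i j ≤ D) (v : Fin n)
    (d : ℕ) (hd : ∀ u, (Nout G u).card ≤ d) : n ≤ (d + 1) ^ D := by
  classical
  set Ball : ℕ → Finset (Fin n) :=
    fun t => Finset.univ.filter (fun j => ∃ k ≤ t, WalkIn G.edges v j k) with hB
  have hball : ∀ t, (Ball t).card ≤ (d + 1) ^ t := by
    intro t
    induction t with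
    | zero =>
      have : Ball 0 ⊆ {v} := by
        intro j hj
        rw [hB] at hj
        simp only [Finset.mem_filter, Finset.mem_univ, true_and] at hj
        obtain ⟨k, hk0, hw⟩ := hj
        rw [Nat.le_zero.mp hk0] at hw
        rw [Finset.mem_singleton, ← walkIn_zero hw]
      calc (Ball 0).card ≤ ({v} : Finset (Fin n)).card := Finset.card_le_card this
      _ = 1 := by simp
      _ ≤ (d + 1) ^ 0 := by simp
    | succ t ih =>
      have hsub : Ball (t + 1) ⊆ Ball t ∪ (Ball t).biUnion (fun w => Nout G w) := by
        intro j hj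
        rw [hB] at hj
        simp only [Finset.mem_filter, Finset.mem_univ, true_and] at hj
        obtain ⟨k, hk, hw⟩ := hj
        rcases Nat.lt_or_ge k (t + 1) with hlt | hge
        · apply Finset.mem_union_left
          rw [hB]
          simp only [Finset.mem_filter, Finset.mem_univ, true_and]
          exact ⟨k, by omega, hw⟩
        · have hkt : k = t + 1 := by omega
          subst hkt
          obtain ⟨g, h0, hkj, hs⟩ := hw
          apply Finset.mem_union_right
          rw [Finset.mem_biUnion]
          refine ⟨g t, ?_, ?_⟩
          · rw [hB]
            simp only [Finset.mem_filter, Finset.mem_univ, true_and]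
            exact ⟨t, le_rfl, g, h0, rfl, fun r hr => hs r (by omega)⟩
          · rw [mem_Nout, ← hkj]
            exact hs t (by omega)
      calc (Ball (t + 1)).card ≤ (Ball t ∪ (Ball t).biUnion (fun w => Nout G w)).card :=
            Finset.card_le_card hsub
      _ ≤ (Ball t).card + ((Ball t).biUnion (fun w => Nout G w)).card :=
            Finset.card_union_le _ _
      _ ≤ (Ball t).card + (Ball t).card * d := by
            have := Finset.card_biUnion_le (s := Ball t) (t := fun w => Nout G w)
            have hsum : ∑ w ∈ Ball t, (Nout G w).card ≤ (Ball t).card * d := by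
              calc ∑ w ∈ Ball t, (Nout G w).card ≤ ∑ _w ∈ Ball t, d :=
                    Finset.sum_le_sum (fun w _ => hd w)
              _ = (Ball t).card * d := by rw [Finset.sum_const, smul_eq_mul]
            omega
      _ = (Ball t).card * (d + 1) := by ring
      _ ≤ (d + 1) ^ t * (d + 1) := Nat.mul_le_mul_right _ ih
      _ = (d + 1) ^ (t + 1) := by ring
  have huniv : Finset.univ ⊆ Ball D := by
    intro j _
    rw [hB]
    simp only [Finset.mem_filter, Finset.mem_univ, true_and]
    by_cases hjv : j = v
    · exact ⟨0, Nat.zero_le D, by rw [hjv]; exact walkIn_refl _ v⟩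
    · exact ⟨G.dist v j, hdist v j (Ne.symm hjv), exists_walk_dist hv hc v j⟩
  calc n = (Finset.univ : Finset (Fin n)).card := by simp
  _ ≤ (Ball D).card := Finset.card_le_card huniv
  _ ≤ (d + 1) ^ D := hball D

end Aux
namespace Aux

open Finset Money Money.Digraph
open scoped symmDiff

variable {n : ℕ}

/-- KC1: for any pair `i ≠ k`, the number of out-edges of `k` whose heads reach
`i` avoiding `k`, plus one, bounds the price complexity from below. -/
lemma kc1 (G : Digraph n) (hv : G.verts = Finset.univ) (hc : G.Connected)
    {i k : Fin n} (hik : i ≠ k) :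
    ((Nout G k).filter (fun x => ReachIn (avoid G.edges k) x i)).card + 1 ≤
      G.priceComplexity := by
  classical
  obtain ⟨y₀, hy₀E, hy₀r⟩ := exists_first_edge hik (reaches_of_connected hv hc i k)
  set R := (Nout G k).filter (fun x => ReachIn (avoid G.edges k) x i) with hR
  set S := R.image (fun x => (k, x)) ∪ {(i, y₀)} with hS
  have hSE : S ⊆ G.edges := by
    intro e he
    rw [hS, Finset.mem_union] at he
    rcases he with he | he
    · obtain ⟨x, hx, rfl⟩ := Finset.mem_image.mp he
      rw [hR, Finset.mem_filter, mem_Nout] at hx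
      exact hx.1
    · rw [Finset.mem_singleton.mp he]
      exact hy₀E
  have hcert : ∀ e ∈ S, CertA G i k e ∨ CertA G k i e := by
    intro e he
    rw [hS, Finset.mem_union] at he
    rcases he with he | he
    · obtain ⟨x, hx, rfl⟩ := Finset.mem_image.mp he
      rw [hR, Finset.mem_filter, mem_Nout] at hx
      left
      refine ⟨?_, fun T hT => hT.2.2.1 x⟩
      obtain ⟨T, hT, hm⟩ := exists_spanTree_through G hv hc hx.1 (Ne.symm hik) hx.2
      exact ⟨T, hT, hm⟩
    · rw [Finset.mem_singleton.mp he]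
      right
      refine ⟨?_, fun T hT => hT.2.2.1 y₀⟩
      obtain ⟨T, hT, hm⟩ := exists_spanTree_through G hv hc hy₀E hik hy₀r
      exact ⟨T, hT, hm⟩
  have hcard : S.card = R.card + 1 := by
    rw [hS]
    rw [Finset.card_union_of_disjoint, Finset.card_image_of_injective, Finset.card_singleton]
    · intro a b hab
      simpa using congrArg Prod.snd hab
    · rw [Finset.disjoint_singleton_right]
      intro hmem
      obtain ⟨x, _, hx2⟩ := Finset.mem_image.mp hmem
      exact hik (congrArg Prod.fst hx2).symm
  rw [← hcard]
  exact le_priceComplexity G hv hc hik S hSE hcert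

/-- KC2: pair-based count via symmetric difference of reach-sets through `v`. -/
lemma kc2 (G : Digraph n) (hv : G.verts = Finset.univ) (hc : G.Connected)
    {v i j : Fin n} (hiv : i ≠ v) (hjv : j ≠ v) (hij : i ≠ j) :
    (((Nout G v).filter (fun x => ReachIn (avoid G.edges v) x i)) ∆
      ((Nout G v).filter (fun x => ReachIn (avoid G.edges v) x j))).card + 2 ≤
      G.priceComplexity := by
  classical
  obtain ⟨y₀, hy₀E, hy₀r⟩ := exists_first_edge hij (reaches_of_connected hv hc i j)
  obtain ⟨y₁, hy₁E, hy₁r⟩ := exists_first_edge (Ne.symm hij) (reaches_of_connected hv hc j i)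
  set Ri := (Nout G v).filter (fun x => ReachIn (avoid G.edges v) x i) with hRi
  set Rj := (Nout G v).filter (fun x => ReachIn (avoid G.edges v) x j) with hRj
  set S := (Ri ∆ Rj).image (fun x => (v, x)) ∪ {(i, y₀), (j, y₁)} with hS
  have hSE : S ⊆ G.edges := by
    intro e he
    rw [hS, Finset.mem_union] at he
    rcases he with he | he
    · obtain ⟨x, hx, rfl⟩ := Finset.mem_image.mp he
      rw [Finset.mem_symmDiff] at hx
      rcases hx with ⟨hx, -⟩ | ⟨hx, -⟩
      · rw [hRi, Finset.mem_filter, mem_Nout] at hx; exact hx.1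
      · rw [hRj, Finset.mem_filter, mem_Nout] at hx; exact hx.1
    · rcases Finset.mem_insert.mp he with he | he
      · rw [he]; exact hy₀E
      · rw [Finset.mem_singleton.mp he]; exact hy₁E
  have hcert : ∀ e ∈ S, CertA G i j e ∨ CertA G j i e := by
    intro e he
    rw [hS, Finset.mem_union] at he
    rcases he with he | he
    · obtain ⟨x, hx, rfl⟩ := Finset.mem_image.mp he
      rw [Finset.mem_symmDiff] at hx
      rcases hx with ⟨hx, hnx⟩ | ⟨hx, hnx⟩
      · rw [hRi, Finset.mem_filter, mem_Nout] at hx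
        left
        refine ⟨?_, ?_⟩
        · obtain ⟨T, hT, hm⟩ := exists_spanTree_through G hv hc hx.1 (Ne.symm hiv) hx.2
          exact ⟨T, hT, hm⟩
        · intro T hT hm
          apply hnx
          rw [hRj, Finset.mem_filter, mem_Nout]
          exact ⟨hx.1, spanTree_mem_reach G hv hT hm⟩
      · rw [hRj, Finset.mem_filter, mem_Nout] at hx
        right
        refine ⟨?_, ?_⟩
        · obtain ⟨T, hT, hm⟩ := exists_spanTree_through G hv hc hx.1 (Ne.symm hjv) hx.2
          exact ⟨T, hT, hm⟩
        · intro T hT hm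
          apply hnx
          rw [hRi, Finset.mem_filter, mem_Nout]
          exact ⟨hx.1, spanTree_mem_reach G hv hT hm⟩
    · rcases Finset.mem_insert.mp he with he | he
      · rw [he]
        right
        refine ⟨?_, fun T hT => hT.2.2.1 y₀⟩
        obtain ⟨T, hT, hm⟩ := exists_spanTree_through G hv hc hy₀E hij hy₀r
        exact ⟨T, hT, hm⟩
      · rw [Finset.mem_singleton.mp he]
        left
        refine ⟨?_, fun T hT => hT.2.2.1 y₁⟩
        obtain ⟨T, hT, hm⟩ := exists_spanTree_through G hv hc hy₁E (Ne.symm hij) hy₁r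
        exact ⟨T, hT, hm⟩
  have hcard : S.card = (Ri ∆ Rj).card + 2 := by
    rw [hS]
    rw [Finset.card_union_of_disjoint, Finset.card_image_of_injective]
    · have : ({(i, y₀), (j, y₁)} : Finset (Fin n × Fin n)).card = 2 := by
        rw [Finset.card_insert_of_notMem, Finset.card_singleton]
        rw [Finset.mem_singleton]
        intro hmem
        exact hij (congrArg Prod.fst hmem)
      rw [this]
    · intro a b hab
      simpa using congrArg Prod.snd hab
    · rw [Finset.disjoint_left]
      intro e he hmem
      obtain ⟨x, -, rfl⟩ := Finset.mem_image.mp he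
      rcases Finset.mem_insert.mp hmem with h | h
      · exact hiv (congrArg Prod.fst h).symm
      · exact hjv (congrArg Prod.fst (Finset.mem_singleton.mp h)).symm
  rw [← hcard]
  exact le_priceComplexity G hv hc hij S hSE hcert

end Aux
namespace Aux

open Finset Money Money.Digraph
open scoped symmDiff

variable {n : ℕ}

lemma reachIn_avoid_src {E' : Finset (Fin n × Fin n)} {v j : Fin n}
    (h : ReachIn (avoid E' v) v j) : v = j := by
  rcases Relation.ReflTransGen.cases_head h with h | ⟨c, hc, -⟩
  · exact h
  · rw [mem_avoid] at hc
    exact absurd rfl hc.2.1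

lemma reachIn_avoid_tgt {E' : Finset (Fin n × Fin n)} {v x w : Fin n}
    (h : ReachIn (avoid E' v) x w) (hx : x ≠ v) : w ≠ v := by
  rcases Relation.ReflTransGen.cases_tail h with h | ⟨c, -, hc⟩
  · rw [h]; exact hx
  · rw [mem_avoid] at hc
    exact hc.2.2

/-- In a diameter-2 graph, `u` reaches `w` avoiding `v` as soon as the potential
2-step route through `v` is blocked on one side. -/
lemma reach_avoid_of_dist2 (G : Digraph n) (hv : G.verts = Finset.univ) (hc : G.Connected)
    (hdist : ∀ i j : Fin n, i ≠ j → G.dist i j ≤ 2) {u w v : Fin n}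
    (huw : u ≠ w) (huv : u ≠ v) (hwv : w ≠ v)
    (hmid : (u, v) ∉ G.edges ∨ (v, w) ∉ G.edges) :
    ReachIn (avoid G.edges v) u w := by
  have hwalk := exists_walk_dist hv hc u w
  have h12 : G.dist u w = 1 ∨ G.dist u w = 2 := by
    have h1 := dist_pos hv hc huw
    have h2 := hdist u w huw
    omega
  rcases h12 with h | h <;> rw [h] at hwalk <;> obtain ⟨g, h0, hk, hs⟩ := hwalk
  · have he : (u, w) ∈ G.edges := by
      have := hs 0 (by omega)
      rwa [h0, show g (0 + 1) = w from hk] at this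
    exact Relation.ReflTransGen.single (mem_avoid.mpr ⟨he, huv, hwv⟩)
  · have he1 : (u, g 1) ∈ G.edges := by
      have := hs 0 (by omega); rwa [h0] at this
    have he2 : (g 1, w) ∈ G.edges := by
      have := hs 1 (by omega); rwa [show g (1 + 1) = w from hk] at this
    by_cases hg1 : g 1 = v
    · rw [hg1] at he1 he2
      rcases hmid with hm | hm
      · exact absurd he1 hm
      · exact absurd he2 hm
    · exact Relation.ReflTransGen.head (mem_avoid.mpr ⟨he1, huv, hg1⟩)
        (Relation.ReflTransGen.single (mem_avoid.mpr ⟨he2, hg1, hwv⟩))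

/-- There are always two distinct vertices when `2 ≤ n`; in particular some
vertex different from any given `v`. -/
lemma exists_ne_vertex (hn : 2 ≤ n) (v : Fin n) : ∃ u : Fin n, u ≠ v := by
  have h0 : (0 : ℕ) < n := by omega
  have h1 : (1 : ℕ) < n := by omega
  by_cases hc : v = ⟨0, h0⟩
  · refine ⟨⟨1, h1⟩, ?_⟩
    rw [hc]
    intro h
    have := congrArg Fin.val h
    simp at this
  · exact ⟨⟨0, h0⟩, fun h => hc h.symm⟩

/-- Complete graphs have price complexity at least `n`. -/
lemma pc_of_complete (G : Digraph n) (hv : G.verts = Finset.univ) (hc : G.Connected)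
    (hn : 2 ≤ n) (hcomp : ∀ i j : Fin n, i ≠ j → (i, j) ∈ G.edges) :
    n ≤ G.priceComplexity := by
  classical
  have h0 : (0 : ℕ) < n := by omega
  have h1 : (1 : ℕ) < n := by omega
  set k : Fin n := ⟨0, h0⟩ with hk
  obtain ⟨i, hik⟩ := exists_ne_vertex hn k
  have hNout : Nout G k = Finset.univ.erase k := by
    ext x
    rw [mem_Nout, Finset.mem_erase]
    constructor
    · intro h
      exact ⟨fun he => G.no_loops _ h (by simp [he]), Finset.mem_univ x⟩
    · intro h
      exact hcomp k x (Ne.symm h.1)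
  have hfilter : (Nout G k).filter (fun x => ReachIn (avoid G.edges k) x i) = Nout G k := by
    apply Finset.filter_true_of_mem
    intro x hx
    have hxk : x ≠ k := ne_of_mem_Nout hx
    by_cases hxi : x = i
    · rw [hxi]; exact Relation.ReflTransGen.refl
    · exact Relation.ReflTransGen.single
        (mem_avoid.mpr ⟨hcomp x i hxi, hxk, hik⟩)
  have := kc1 G hv hc hik
  rw [hfilter, hNout, Finset.card_erase_of_mem (Finset.mem_univ k), Finset.card_univ,
    Fintype.card_fin] at this
  omega

/-- Bounded diameter and enough vertices force price complexity at least 4. -/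
lemma pc_ge_four (G : Digraph n) (hv : G.verts = Finset.univ) (hc : G.Connected)
    (D : ℕ) (hdist : ∀ i j : Fin n, i ≠ j → G.dist i j ≤ D) (hn : 3 ^ D + 1 ≤ n) :
    4 ≤ G.priceComplexity := by
  classical
  by_contra hcon
  have hπ : G.priceComplexity ≤ 3 := by omega
  have hn2 : 2 ≤ n := by
    have : 1 ≤ 3 ^ D := Nat.one_le_pow D 3 (by omega)
    omega
  have h0 : (0 : ℕ) < n := by omega
  obtain ⟨v, -, hvmax⟩ := Finset.exists_max_image (Finset.univ : Finset (Fin n))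
    (fun u => (Nout G u).card) ⟨⟨0, h0⟩, Finset.mem_univ _⟩
  set d := (Nout G v).card with hd
  have hball : n ≤ (d + 1) ^ D :=
    card_le_ball G hv hc D hdist v d (fun u => hvmax u (Finset.mem_univ u))
  have hd3 : 3 ≤ d := by
    by_contra hdc
    have : (d + 1) ^ D ≤ 3 ^ D := Nat.pow_le_pow_left (by omega) D
    omega
  -- multiplicity bound from KC1
  have hR2 : ∀ w, w ≠ v →
      ((Nout G v).filter (fun x => ReachIn (avoid G.edges v) x w)).card ≤ 2 := by
    intro w hw
    have := kc1 G hv hc hw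
    omega
  set Rch : Fin n → Finset (Fin n) :=
    fun x => Finset.univ.filter (fun w => ReachIn (avoid G.edges v) x w) with hRch
  have hmemRch : ∀ x w, w ∈ Rch x ↔ ReachIn (avoid G.edges v) x w := by
    intro x w; rw [hRch]; simp
  by_cases hchain : ∀ x₁ ∈ Nout G v, ∀ x₂ ∈ Nout G v, Rch x₁ ⊆ Rch x₂ ∨ Rch x₂ ⊆ Rch x₁
  · -- chain case
    have hne : (Nout G v).Nonempty := Finset.card_pos.mp (by omega)
    obtain ⟨x₀, hx₀, hmin⟩ := Finset.exists_min_image (Nout G v) (fun x => (Rch x).card) hne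
    have hx₀v : x₀ ≠ v := ne_of_mem_Nout hx₀
    have hsub : Nout G v ⊆ (Nout G v).filter (fun x => ReachIn (avoid G.edges v) x x₀) := by
      intro x hx
      rw [Finset.mem_filter]
      refine ⟨hx, ?_⟩
      have hcomp : Rch x₀ ⊆ Rch x := by
        rcases hchain x₀ hx₀ x hx with h | h
        · exact h
        · have heq : Rch x = Rch x₀ := Finset.eq_of_subset_of_card_le h (hmin x hx)
          rw [heq]
      have : x₀ ∈ Rch x₀ := (hmemRch x₀ x₀).mpr Relation.ReflTransGen.refl
      exact (hmemRch x x₀).mp (hcomp this)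
    have := Finset.card_le_card hsub
    have := hR2 x₀ hx₀v
    omega
  · -- incomparable case
    push_neg at hchain
    obtain ⟨x₁, hx₁, x₂, hx₂, hns1, hns2⟩ := hchain
    obtain ⟨i, hi1m, hi2⟩ := Finset.not_subset.mp hns1
    obtain ⟨j, hj1m, hj2⟩ := Finset.not_subset.mp hns2
    have hi1 : ReachIn (avoid G.edges v) x₁ i := (hmemRch x₁ i).mp hi1m
    have hj1 : ReachIn (avoid G.edges v) x₂ j := (hmemRch x₂ j).mp hj1m
    have hiv : i ≠ v := reachIn_avoid_tgt hi1 (ne_of_mem_Nout hx₁)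
    have hjv : j ≠ v := reachIn_avoid_tgt hj1 (ne_of_mem_Nout hx₂)
    have hij : i ≠ j := fun h => hi2 (h ▸ hj1m)
    have hx12 : x₁ ≠ x₂ := by
      intro h
      apply hi2
      rw [hmemRch]
      rw [← h]
      exact hi1
    have hsub : ({x₁, x₂} : Finset (Fin n)) ⊆
        ((Nout G v).filter (fun x => ReachIn (avoid G.edges v) x i)) ∆
        ((Nout G v).filter (fun x => ReachIn (avoid G.edges v) x j)) := by
      intro x hx
      rcases Finset.mem_insert.mp hx with rfl | hx
      · rw [Finset.mem_symmDiff]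
        left
        refine ⟨Finset.mem_filter.mpr ⟨hx₁, hi1⟩, ?_⟩
        intro hmem
        exact hj2 ((hmemRch x j).mpr (Finset.mem_filter.mp hmem).2)
      · rw [Finset.mem_singleton.mp hx, Finset.mem_symmDiff]
        right
        refine ⟨Finset.mem_filter.mpr ⟨hx₂, hj1⟩, ?_⟩
        intro hmem
        exact hi2 ((hmemRch x₂ i).mpr (Finset.mem_filter.mp hmem).2)
    have hcard2 : 2 ≤ (((Nout G v).filter (fun x => ReachIn (avoid G.edges v) x i)) ∆
        ((Nout G v).filter (fun x => ReachIn (avoid G.edges v) x j))).card := by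
      calc 2 = ({x₁, x₂} : Finset (Fin n)).card := by
            rw [Finset.card_insert_of_notMem (by simpa using hx12), Finset.card_singleton]
      _ ≤ _ := Finset.card_le_card hsub
    have := kc2 G hv hc hiv hjv hij
    omega

end Aux
namespace Aux

open Finset Money Money.Digraph
open scoped symmDiff

variable {n : ℕ}

/-- The out-edges of `v` whose heads reach `i` avoiding `v`. -/
noncomputable def RvSet (G : Digraph n) (v i : Fin n) : Finset (Fin n) :=
  (Nout G v).filter (fun x => ReachIn (avoid G.edges v) x i)

lemma mem_RvSet {G : Digraph n} {v i x : Fin n} :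
    x ∈ RvSet G v i ↔ (v, x) ∈ G.edges ∧ ReachIn (avoid G.edges v) x i := by
  rw [RvSet, Finset.mem_filter, mem_Nout]

/-- Non-star graphs of diameter two on at least 300 vertices have price
complexity at least 5. -/
lemma pc_ge_five (G : Digraph n) (hv : G.verts = Finset.univ) (hc : G.Connected)
    (hdist : ∀ i j : Fin n, i ≠ j → G.dist i j ≤ 2) (hns : ¬G.IsStar) (hn : 300 ≤ n) :
    5 ≤ G.priceComplexity := by
  classical
  by_contra hcon
  have hπ : G.priceComplexity ≤ 4 := by omega
  have h0 : (0 : ℕ) < n := by omega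
  obtain ⟨v, -, hvmax⟩ := Finset.exists_max_image (Finset.univ : Finset (Fin n))
    (fun u => (Nout G u).card) ⟨⟨0, h0⟩, Finset.mem_univ _⟩
  have hball : n ≤ ((Nout G v).card + 1) ^ 2 :=
    card_le_ball G hv hc 2 hdist v _ (fun u => hvmax u (Finset.mem_univ u))
  have hd17 : 17 ≤ (Nout G v).card := by
    by_contra hdc
    have h1 : ((Nout G v).card + 1) ^ 2 ≤ 17 ^ 2 := Nat.pow_le_pow_left (by omega) 2
    have h2 : (17 : ℕ) ^ 2 = 289 := by norm_num
    omega
  have hkc1 : ∀ (k i : Fin n), i ≠ k →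
      ((Nout G k).filter (fun x => ReachIn (avoid G.edges k) x i)).card ≤ 3 := by
    intro k i hik
    have := kc1 G hv hc hik
    omega
  -- Step b: `v` points to every other vertex.
  have hvall : ∀ x : Fin n, x ≠ v → (v, x) ∈ G.edges := by
    by_contra hcb
    push_neg at hcb
    obtain ⟨x₀, hx₀v, hx₀E⟩ := hcb
    have hsub : Nout G v ⊆ (Nout G v).filter (fun x => ReachIn (avoid G.edges v) x x₀) := by
      intro l hl
      refine Finset.mem_filter.mpr ⟨hl, ?_⟩
      have hlv : l ≠ v := ne_of_mem_Nout hl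
      have hlx₀ : l ≠ x₀ := by
        intro h; rw [h] at hl; exact hx₀E (mem_Nout.mp hl)
      exact reach_avoid_of_dist2 G hv hc hdist hlx₀ hlv hx₀v (Or.inr hx₀E)
    have h1 := Finset.card_le_card hsub
    have h2 := hkc1 v x₀ hx₀v
    omega
  have hR3 : ∀ i, i ≠ v → (RvSet G v i).card ≤ 3 := fun i hi => hkc1 v i hi
  have hRmem : ∀ i, i ≠ v → i ∈ RvSet G v i := by
    intro i hi
    rw [mem_RvSet]
    exact ⟨hvall i hi, Relation.ReflTransGen.refl⟩
  have hΔ2 : ∀ i j : Fin n, i ≠ v → j ≠ v → i ≠ j →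
      (RvSet G v i ∆ RvSet G v j).card ≤ 2 := by
    intro i j hiv hjv hij
    have h := kc2 G hv hc hiv hjv hij
    have h' : (RvSet G v i ∆ RvSet G v j).card + 2 ≤ G.priceComplexity := h
    omega
  -- Step e: there is an edge avoiding `v`.
  obtain ⟨a, b, habE, hav, hbv⟩ : ∃ a b : Fin n, (a, b) ∈ G.edges ∧ a ≠ v ∧ b ≠ v := by
    by_contra hce
    push_neg at hce
    apply hns
    refine ⟨v, hv, ?_⟩
    ext e
    obtain ⟨e1, e2⟩ := e
    simp only [Finset.mem_filter, Finset.mem_univ, true_and]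
    constructor
    · intro he
      have hne : e1 ≠ e2 := G.no_loops _ he
      by_cases h1 : e1 = v
      · exact Or.inl ⟨h1, fun h2 => hne (by rw [h1, h2])⟩
      · exact Or.inr ⟨hce e1 e2 he h1, h1⟩
    · rintro (⟨h1, h2⟩ | ⟨h1, h2⟩)
      · rw [h1]; exact hvall e2 h2
      · rw [h1]
        obtain ⟨y, hyE, -⟩ := exists_first_edge h2 (reaches_of_connected hv hc e1 v)
        have hyv := hce e1 y hyE h2
        rwa [hyv] at hyE
  have hab : a ≠ b := G.no_loops _ habE
  have haRb : a ∈ RvSet G v b := by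
    rw [mem_RvSet]
    exact ⟨hvall a hav, Relation.ReflTransGen.single (mem_avoid.mpr ⟨habE, hav, hbv⟩)⟩
  -- Step g: every `Rv j` meets `Rv b`.
  have hmeet : ∀ j : Fin n, j ≠ v → ∃ z, z ∈ RvSet G v b ∧ z ∈ RvSet G v j := by
    intro j hjv
    by_contra hg
    push_neg at hg
    have hjb : j ≠ b := by
      intro h
      subst h
      exact hg j (hRmem j hjv) (hRmem j hjv)
    have hjRb : j ∉ RvSet G v b := fun h => hg j h (hRmem j hjv)
    have hsub : ({a, b, j} : Finset (Fin n)) ⊆ RvSet G v b ∆ RvSet G v j := by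
      intro x hx
      rw [Finset.mem_symmDiff]
      rcases Finset.mem_insert.mp hx with rfl | hx
      · exact Or.inl ⟨haRb, fun h => hg x haRb h⟩
      rcases Finset.mem_insert.mp hx with rfl | hx
      · exact Or.inl ⟨hRmem x hbv, fun h => hg x (hRmem x hbv) h⟩
      · rw [Finset.mem_singleton.mp hx]
        exact Or.inr ⟨hRmem j hjv, hjRb⟩
    have hcard3 : 3 ≤ (RvSet G v b ∆ RvSet G v j).card := by
      have hja : j ≠ a := fun h => hjRb (h ▸ haRb)
      calc 3 = ({a, b, j} : Finset (Fin n)).card := by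
            rw [Finset.card_insert_of_notMem, Finset.card_insert_of_notMem,
              Finset.card_singleton]
            · simpa using hjb.symm
            · simp only [Finset.mem_insert, Finset.mem_singleton]
              push_neg
              exact ⟨hab, hja.symm⟩
      _ ≤ _ := Finset.card_le_card hsub
    have := hΔ2 b j hbv hjv (Ne.symm hjb)
    omega
  -- Step ☆: every non-`v` vertex has few out-neighbours with an edge to `v`.
  have hBout : ∀ u : Fin n, u ≠ v →
      ((Nout G u).filter (fun x => x ≠ v ∧ (x, v) ∈ G.edges)).card ≤ 3 := by
    intro u huv
    by_contra hf
    push_neg at hf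
    have hfne : ((Nout G u).filter (fun x => x ≠ v ∧ (x, v) ∈ G.edges)).Nonempty :=
      Finset.card_pos.mp (by omega)
    obtain ⟨x₅, hx₅⟩ := hfne
    have hx₅N : x₅ ∈ Nout G u := (Finset.mem_filter.mp hx₅).1
    have hx₅v : x₅ ≠ v := (Finset.mem_filter.mp hx₅).2.1
    have hx₅u : x₅ ≠ u := ne_of_mem_Nout hx₅N
    have hsub : ((Nout G u).filter (fun x => x ≠ v ∧ (x, v) ∈ G.edges)) ⊆
        (Nout G u).filter (fun x => ReachIn (avoid G.edges u) x x₅) := by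
      intro x hx
      obtain ⟨hxN, hxv, hxvE⟩ := Finset.mem_filter.mp hx
      refine Finset.mem_filter.mpr ⟨hxN, ?_⟩
      by_cases hxx : x = x₅
      · rw [hxx]; exact Relation.ReflTransGen.refl
      · refine Relation.ReflTransGen.head (mem_avoid.mpr ⟨hxvE, ne_of_mem_Nout hxN, Ne.symm huv⟩)
          (Relation.ReflTransGen.single (mem_avoid.mpr ⟨hvall x₅ hx₅v, Ne.symm huv, hx₅u⟩))
    have h1 := Finset.card_le_card hsub
    have h2 := hkc1 u x₅ hx₅u
    omega
  -- Step i: few vertices lack an edge to `v`.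
  have hBc3 : (Finset.univ.filter (fun x : Fin n => x ≠ v ∧ (x, v) ∉ G.edges)).card ≤ 3 := by
    by_cases hB : ∃ i₀ : Fin n, i₀ ≠ v ∧ (i₀, v) ∈ G.edges
    · obtain ⟨i₀, hi₀v, hi₀E⟩ := hB
      have hsub : (Finset.univ.filter (fun x : Fin n => x ≠ v ∧ (x, v) ∉ G.edges)) ⊆
          RvSet G v i₀ := by
        intro u hu
        obtain ⟨-, huv, huvE⟩ := Finset.mem_filter.mp hu
        have hui₀ : u ≠ i₀ := by
          intro h; rw [h] at huvE; exact huvE hi₀E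
        rw [mem_RvSet]
        exact ⟨hvall u huv,
          reach_avoid_of_dist2 G hv hc hdist hui₀ huv hi₀v (Or.inl huvE)⟩
      exact le_trans (Finset.card_le_card hsub) (hR3 i₀ hi₀v)
    · exfalso
      push_neg at hB
      obtain ⟨i₀, hi₀⟩ := exists_ne_vertex (by omega) v
      have hsub : (Finset.univ.erase i₀).erase v ⊆ RvSet G v i₀ := by
        intro u hu
        have huv : u ≠ v := (Finset.mem_erase.mp hu).1
        have hui₀ : u ≠ i₀ := (Finset.mem_erase.mp (Finset.mem_erase.mp hu).2).1
        rw [mem_RvSet]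
        exact ⟨hvall u huv,
          reach_avoid_of_dist2 G hv hc hdist hui₀ huv hi₀ (Or.inl (hB u huv))⟩
      have h1 := Finset.card_le_card hsub
      have hvmem : v ∈ Finset.univ.erase i₀ :=
        Finset.mem_erase.mpr ⟨Ne.symm hi₀, Finset.mem_univ v⟩
      have h2 : ((Finset.univ.erase i₀).erase v).card = n - 2 := by
        rw [Finset.card_erase_of_mem hvmem, Finset.card_erase_of_mem (Finset.mem_univ i₀),
          Finset.card_univ, Fintype.card_fin]
        omega
      have h3 := hR3 i₀ hi₀
      omega
  -- Step j: all non-`v` vertices have small out-neighbourhoods away from `v`.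
  have hN6 : ∀ u : Fin n, u ≠ v → ((Nout G u).erase v).card ≤ 6 := by
    intro u huv
    have hsub : (Nout G u).erase v ⊆
        ((Nout G u).filter (fun x => x ≠ v ∧ (x, v) ∈ G.edges)) ∪
        (Finset.univ.filter (fun x : Fin n => x ≠ v ∧ (x, v) ∉ G.edges)) := by
      intro x hx
      have hxv : x ≠ v := (Finset.mem_erase.mp hx).1
      have hxN : x ∈ Nout G u := (Finset.mem_erase.mp hx).2
      by_cases hE : (x, v) ∈ G.edges
      · exact Finset.mem_union_left _ (Finset.mem_filter.mpr ⟨hxN, hxv, hE⟩)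
      · exact Finset.mem_union_right _ (Finset.mem_filter.mpr ⟨Finset.mem_univ x, hxv, hE⟩)
    calc ((Nout G u).erase v).card ≤ _ := Finset.card_le_card hsub
    _ ≤ ((Nout G u).filter (fun x => x ≠ v ∧ (x, v) ∈ G.edges)).card +
        (Finset.univ.filter (fun x : Fin n => x ≠ v ∧ (x, v) ∉ G.edges)).card :=
          Finset.card_union_le _ _
    _ ≤ 6 := by
          have := hBout u huv
          omega
  -- Final covering argument.
  set TB : Fin n → Finset (Fin n) := fun z =>
    insert z (((Nout G z).erase v) ∪
      ((Nout G z).erase v).biUnion (fun w => (Nout G w).erase v)) with hTB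
  have hcover : Finset.univ.erase v ⊆ (RvSet G v b).biUnion TB := by
    intro j hj
    have hjv : j ≠ v := (Finset.mem_erase.mp hj).1
    obtain ⟨z, hzb, hzj⟩ := hmeet j hjv
    rw [Finset.mem_biUnion]
    refine ⟨z, hzb, ?_⟩
    have hzreach : ReachIn (avoid G.edges v) z j := (mem_RvSet.mp hzj).2
    have hRstep : ∀ w, ReachIn (avoid G.edges v) w j → w ∈ RvSet G v j := by
      intro w hw
      have hwv : w ≠ v := by
        intro h
        rw [h] at hw
        exact hjv (reachIn_avoid_src hw).symm
      rw [mem_RvSet]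
      exact ⟨hvall w hwv, hw⟩
    obtain ⟨k, hkcard, hwalk⟩ := exists_short_walk hzreach (RvSet G v j) hRstep
    have hk2 : k ≤ 2 := by
      have := hR3 j hjv
      omega
    obtain ⟨g, hg0, hgk, hgs⟩ := hwalk
    rw [hTB]
    have hk012 : k = 0 ∨ k = 1 ∨ k = 2 := by omega
    rcases hk012 with rfl | rfl | rfl
    · have : j = z := by rw [← hg0, ← hgk]
      rw [this]
      exact Finset.mem_insert_self z _
    · have he := hgs 0 (by omega)
      rw [hg0] at he
      have hgj : g (0 + 1) = j := hgk
      rw [hgj] at he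
      rw [mem_avoid] at he
      apply Finset.mem_insert_of_mem
      apply Finset.mem_union_left
      exact Finset.mem_erase.mpr ⟨he.2.2, mem_Nout.mpr he.1⟩
    · have he0 := hgs 0 (by omega)
      have he1 := hgs 1 (by omega)
      rw [hg0] at he0
      have hgj : g (1 + 1) = j := hgk
      rw [hgj] at he1
      rw [mem_avoid] at he0 he1
      apply Finset.mem_insert_of_mem
      apply Finset.mem_union_right
      rw [Finset.mem_biUnion]
      refine ⟨g 1, ?_, ?_⟩
      · exact Finset.mem_erase.mpr ⟨he0.2.2, mem_Nout.mpr he0.1⟩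
      · exact Finset.mem_erase.mpr ⟨he1.2.2, mem_Nout.mpr he1.1⟩
  have hTBcard : ∀ z ∈ RvSet G v b, (TB z).card ≤ 43 := by
    intro z hz
    have hzv : z ≠ v := ne_of_mem_Nout (Finset.mem_filter.mp hz).1
    rw [hTB]
    calc (insert z (((Nout G z).erase v) ∪
        ((Nout G z).erase v).biUnion (fun w => (Nout G w).erase v))).card
        ≤ (((Nout G z).erase v) ∪
          ((Nout G z).erase v).biUnion (fun w => (Nout G w).erase v)).card + 1 :=
          Finset.card_insert_le _ _
    _ ≤ (((Nout G z).erase v).card +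
          (((Nout G z).erase v).biUnion (fun w => (Nout G w).erase v)).card) + 1 := by
          have := Finset.card_union_le ((Nout G z).erase v)
            (((Nout G z).erase v).biUnion (fun w => (Nout G w).erase v))
          omega
    _ ≤ 43 := by
          have h1 : ((Nout G z).erase v).card ≤ 6 := hN6 z hzv
          have h2 : (((Nout G z).erase v).biUnion (fun w => (Nout G w).erase v)).card ≤ 36 := by
            calc (((Nout G z).erase v).biUnion (fun w => (Nout G w).erase v)).card
                ≤ ∑ w ∈ (Nout G z).erase v, ((Nout G w).erase v).card :=
                  Finset.card_biUnion_le
            _ ≤ ∑ _w ∈ (Nout G z).erase v, 6 := by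
                  apply Finset.sum_le_sum
                  intro w hw
                  exact hN6 w (Finset.mem_erase.mp hw).1
            _ = ((Nout G z).erase v).card * 6 := by
                  rw [Finset.sum_const, smul_eq_mul]
            _ ≤ 36 := by omega
          omega
  have hfinal : n - 1 ≤ 129 := by
    have h1 : (Finset.univ.erase v).card = n - 1 := by
      rw [Finset.card_erase_of_mem (Finset.mem_univ v), Finset.card_univ, Fintype.card_fin]
    calc n - 1 = (Finset.univ.erase v).card := h1.symm
    _ ≤ ((RvSet G v b).biUnion TB).card := Finset.card_le_card hcover
    _ ≤ ∑ z ∈ RvSet G v b, (TB z).card := Finset.card_biUnion_le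
    _ ≤ ∑ _z ∈ RvSet G v b, 43 := Finset.sum_le_sum hTBcard
    _ = (RvSet G v b).card * 43 := by rw [Finset.sum_const, smul_eq_mul]
    _ ≤ 129 := by
          have := hR3 b hbv
          omega
  omega

end Aux
end Digraph

end Money

open Money Money.Digraph

open Finset Aux Money.Digraph.Aux

/-- for any positive weights `λ, μ`, for all large enough `m` the
star is the unique minimizer of `λπ(G) + μτ(G)` over connected graphs on
`{1,…,m}`. -/
theorem stmt1 (lam mu : ℝ) (hlam : 0 < lam) (hmu : 0 < mu) :
    ∃ m₀ : ℕ, ∀ m : ℕ, m₀ ≤ m → ∀ G : Money.Digraph m,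
      G.verts = Finset.univ → G.Connected → ¬G.IsStar →
      4 * lam + 2 * mu <
        lam * (G.priceComplexity : ℝ) + mu * (G.timeComplexity : ℝ) := by
  classical
  set D : ℕ := 3 + Nat.ceil (4 * lam / mu) with hD
  refine ⟨3 ^ D + Nat.ceil (mu / lam) + 310, ?_⟩
  intro m hm G hGv hGc hGs
  have h3D : 1 ≤ 3 ^ D := Nat.one_le_pow D 3 (by omega)
  have hm310 : 3 ^ D + Nat.ceil (mu / lam) + 310 ≤ m := hm
  have hm2 : 2 ≤ m := by omega
  have hτ1 : 1 ≤ G.timeComplexity := time_pos hGv hGc hm2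
  have hdist : ∀ i j : Fin m, i ≠ j → G.dist i j ≤ G.timeComplexity :=
    fun i j hij => dist_le_time hGv hij
  have hPnn : (0 : ℝ) ≤ (G.priceComplexity : ℝ) := Nat.cast_nonneg _
  have hcase : G.timeComplexity = 1 ∨ G.timeComplexity = 2 ∨
      (3 ≤ G.timeComplexity ∧ G.timeComplexity ≤ D) ∨ D + 1 ≤ G.timeComplexity := by
    omega
  rcases hcase with hτ | hτ | ⟨hτ3, hτD⟩ | hτ
  · -- diameter 1 : complete graph
    have hcomp : ∀ i j : Fin m, i ≠ j → (i, j) ∈ G.edges := by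
      intro i j hij
      have hd1 : G.dist i j = 1 := by
        have h1 := hdist i j hij
        have h2 := dist_pos hGv hGc hij
        omega
      have hwalk := exists_walk_dist hGv hGc i j
      rw [hd1] at hwalk
      obtain ⟨g, hg0, hg1, hgs⟩ := hwalk
      have := hgs 0 (by omega)
      rwa [hg0, show g (0 + 1) = j from hg1] at this
    have hPm : m ≤ G.priceComplexity := pc_of_complete G hGv hGc hm2 hcomp
    have hcP : (m : ℝ) ≤ (G.priceComplexity : ℝ) := by exact_mod_cast hPm
    have hceil : mu / lam ≤ (Nat.ceil (mu / lam) : ℝ) := Nat.le_ceil _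
    have hmR : (Nat.ceil (mu / lam) : ℝ) + 310 ≤ (m : ℝ) := by
      have : ((Nat.ceil (mu / lam) + 310 : ℕ) : ℝ) ≤ (m : ℝ) := by
        exact_mod_cast (by omega : Nat.ceil (mu / lam) + 310 ≤ m)
      push_cast at this
      linarith
    have h1 : mu / lam + 310 ≤ (G.priceComplexity : ℝ) := by linarith
    have h2 : lam * (mu / lam + 310) ≤ lam * (G.priceComplexity : ℝ) :=
      mul_le_mul_of_nonneg_left h1 hlam.le
    have h3 : lam * (mu / lam + 310) = mu + 310 * lam := by
      field_simp
    rw [hτ]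
    push_cast
    linarith
  · -- diameter 2 : non-star, so π ≥ 5
    have hP5 : 5 ≤ G.priceComplexity := by
      refine pc_ge_five G hGv hGc ?_ hGs (by omega)
      intro i j hij
      have := hdist i j hij
      omega
    have h5 : (5 : ℝ) ≤ (G.priceComplexity : ℝ) := by exact_mod_cast hP5
    have h2 : lam * 5 ≤ lam * (G.priceComplexity : ℝ) :=
      mul_le_mul_of_nonneg_left h5 hlam.le
    rw [hτ]
    push_cast
    linarith
  · -- medium diameter : π ≥ 4 and τ ≥ 3
    have hP4 : 4 ≤ G.priceComplexity := by
      refine pc_ge_four G hGv hGc D ?_ (by omega)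
      intro i j hij
      exact (hdist i j hij).trans hτD
    have h4 : (4 : ℝ) ≤ (G.priceComplexity : ℝ) := by exact_mod_cast hP4
    have h3 : (3 : ℝ) ≤ (G.timeComplexity : ℝ) := by exact_mod_cast hτ3
    have h5 : lam * 4 ≤ lam * (G.priceComplexity : ℝ) :=
      mul_le_mul_of_nonneg_left h4 hlam.le
    have h6 : mu * 3 ≤ mu * (G.timeComplexity : ℝ) :=
      mul_le_mul_of_nonneg_left h3 hmu.le
    linarith
  · -- large diameter : μτ alone dominates
    have hceil : 4 * lam / mu ≤ (Nat.ceil (4 * lam / mu) : ℝ) := Nat.le_ceil _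
    have hτR : ((D + 1 : ℕ) : ℝ) ≤ (G.timeComplexity : ℝ) := by exact_mod_cast hτ
    have hDR : ((D : ℕ) : ℝ) = 3 + (Nat.ceil (4 * lam / mu) : ℝ) := by
      rw [hD]
      push_cast
      ring
    have h1 : 4 * lam / mu + 4 ≤ (G.timeComplexity : ℝ) := by
      have : ((D + 1 : ℕ) : ℝ) = ((D : ℕ) : ℝ) + 1 := by push_cast; ring
      rw [this, hDR] at hτR
      linarith
    have h2 : mu * (4 * lam / mu + 4) ≤ mu * (G.timeComplexity : ℝ) :=
      mul_le_mul_of_nonneg_left h1 hmu.le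
    have h3 : mu * (4 * lam / mu + 4) = 4 * lam + 4 * mu := by
      field_simp
    have hlp : 0 ≤ lam * (G.priceComplexity : ℝ) := mul_nonneg hlam.le hPnn
    linarith
end

section
/- Let G be a connected directed graph on {1,…,m} and let b be edge weights with b_kl > 0 for all edges kl of G (set b_kl = 0 for non-edges). Then there exists a vector p ∈ ℝ_{>0}^m, unique up to multiplication by a positive scalar, satisfying the balance equations Σ_i p_i b_ij = p_j Σ_i b_ji for every vertex j; moreover the vector defined by p_i = Σ_{T a spanning i-tree of G} Π_{kl ∈ T} b_kl is such a solution. -/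
open scoped Classical

namespace Money.Digraph

variable {m : ℕ}

/-- The successor function of a functional edge set. -/
noncomputable def nxt (F : Finset (Fin m × Fin m)) (v : Fin m) : Fin m :=
  if h : ∃ k, (v, k) ∈ F then h.choose else v

lemma nxt_mem {F : Finset (Fin m × Fin m)} {v : Fin m} (h : ∃ k, (v, k) ∈ F) :
    (v, nxt F v) ∈ F := by
  rw [nxt, dif_pos h]; exact h.choose_spec

lemma nxt_mem' {F : Finset (Fin m × Fin m)} (hF : ∀ v : Fin m, ∃! k, (v, k) ∈ F)
    (v : Fin m) : (v, nxt F v) ∈ F :=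
  nxt_mem (hF v).exists

lemma nxt_eq {F : Finset (Fin m × Fin m)} (hF : ∀ v : Fin m, ∃! k, (v, k) ∈ F)
    {v k : Fin m} (h : (v, k) ∈ F) : nxt F v = k := by
  obtain ⟨k', _, hu⟩ := hF v
  rw [hu _ (nxt_mem ⟨k, h⟩), hu _ h]

lemma iter_of_rtg {F : Finset (Fin m × Fin m)} (hF : ∀ v : Fin m, ∃! k, (v, k) ∈ F)
    {v w : Fin m} (h : Relation.ReflTransGen (fun a c => (a, c) ∈ F) v w) :
    ∃ t, (nxt F)^[t] v = w := by
  induction h using Relation.ReflTransGen.head_induction_on with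
  | refl => exact ⟨0, rfl⟩
  | head hab _ ih =>
    obtain ⟨t, ht⟩ := ih
    refine ⟨t + 1, ?_⟩
    rw [Function.iterate_succ_apply, nxt_eq hF hab]
    exact ht

lemma rtg_of_iter {F : Finset (Fin m × Fin m)} (hm : ∀ v : Fin m, (v, nxt F v) ∈ F)
    {w : Fin m} :
    ∀ (N : ℕ) (v : Fin m), (nxt F)^[N] v = w → (∀ s < N, (nxt F)^[s] v ≠ w) →
      Relation.ReflTransGen (fun a c => (a, c) ∈ F ∧ a ≠ w) v w := by
  intro N
  induction N with
  | zero => intro v h _; exact h ▸ Relation.ReflTransGen.refl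
  | succ N ih =>
    intro v h hs
    have hvw : v ≠ w := by simpa using hs 0 (Nat.succ_pos N)
    refine Relation.ReflTransGen.head ⟨hm v, hvw⟩ (ih (nxt F v) ?_ ?_)
    · rw [← Function.iterate_succ_apply]; exact h
    · intro s hsN
      have h2 := hs (s + 1) (Nat.succ_lt_succ hsN)
      rw [Function.iterate_succ_apply] at h2
      exact h2

lemma rtg_erase {F : Finset (Fin m × Fin m)} (hm : ∀ v : Fin m, (v, nxt F v) ∈ F)
    {v w : Fin m} (z : Fin m) (h : ∃ t, (nxt F)^[t] v = w) :
    Relation.ReflTransGen (fun a c => (a, c) ∈ F.erase (w, z)) v w := by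
  have h2 := rtg_of_iter hm (Nat.find h) v (Nat.find_spec h) (fun s hs => Nat.find_min h hs)
  exact Relation.ReflTransGen.mono
    (fun (a c : Fin m) (hac : (a, c) ∈ F ∧ a ≠ w) => Finset.mem_erase.mpr
      ⟨fun he => hac.2 (congrArg Prod.fst he), hac.1⟩) _ _ h2

lemma orbit_le {α : Type*} (f : α → α) (j : α) (a : ℕ) (h : f^[a + 1] j = j) :
    ∀ s, ∃ u ≤ a, f^[s] j = f^[u] j := by
  intro s
  induction s with
  | zero => exact ⟨0, Nat.zero_le a, rfl⟩
  | succ s ih =>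
    obtain ⟨u, hu, he⟩ := ih
    rcases Nat.lt_or_ge u a with hlt | hge
    · refine ⟨u + 1, hlt, ?_⟩
      rw [Function.iterate_succ_apply', Function.iterate_succ_apply', he]
    · have hua : u = a := le_antisymm hu hge
      refine ⟨0, Nat.zero_le a, ?_⟩
      calc f^[s + 1] j = f (f^[s] j) := Function.iterate_succ_apply' f s j
        _ = f (f^[a] j) := by rw [he, hua]
        _ = f^[a + 1] j := (Function.iterate_succ_apply' f a j).symm
        _ = j := h
        _ = f^[0] j := rfl

lemma pred_core {F : Finset (Fin m × Fin m)} (hF : ∀ v : Fin m, ∃! k, (v, k) ∈ F)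
    {i i' j : Fin m} (hij : (i, j) ∈ F)
    (h1 : ∃ a, (nxt F)^[a] j = i) (h2 : ∃ a, (nxt F)^[a] j = i')
    (hle : Nat.find h1 ≤ Nat.find h2) : i = i' := by
  have ha : (nxt F)^[Nat.find h1] j = i := Nat.find_spec h1
  have hfi : nxt F i = j := nxt_eq hF hij
  have hcyc : (nxt F)^[Nat.find h1 + 1] j = j := by
    rw [Function.iterate_succ_apply', ha, hfi]
  obtain ⟨u, hu, he⟩ := orbit_le (nxt F) j (Nat.find h1) hcyc (Nat.find h2)
  have h2u : (nxt F)^[u] j = i' := by rw [← he]; exact Nat.find_spec h2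
  have hfind : Nat.find h2 ≤ u := Nat.find_min' h2 h2u
  have huu : u = Nat.find h1 := le_antisymm hu (le_trans hle hfind)
  rw [← ha, ← h2u, huu]

lemma pred_unique {F : Finset (Fin m × Fin m)} (hF : ∀ v : Fin m, ∃! k, (v, k) ∈ F)
    {i i' j : Fin m} (hij : (i, j) ∈ F) (hij' : (i', j) ∈ F)
    (h1 : ∃ a, (nxt F)^[a] j = i) (h2 : ∃ a, (nxt F)^[a] j = i') : i = i' := by
  rcases le_total (Nat.find h1) (Nat.find h2) with h | h
  · exact pred_core hF hij h1 h2 h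
  · exact (pred_core hF hij' h2 h1 h).symm

/-- The predecessor of `j` on the unique cycle of a functional graph in which
every vertex reaches `j`. -/
noncomputable def cpred (F : Finset (Fin m × Fin m)) (j : Fin m) : Fin m :=
  if h : ∃ t, (nxt F)^[t + 1] j = j then (nxt F)^[Nat.find h] j else j

lemma cpred_spec {F : Finset (Fin m × Fin m)} (hF : ∀ v : Fin m, ∃! k, (v, k) ∈ F)
    {j : Fin m}
    (hreach : ∀ v : Fin m, Relation.ReflTransGen (fun a c => (a, c) ∈ F) v j) :
    nxt F (cpred F j) = j ∧ ∃ a, (nxt F)^[a] j = cpred F j := by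
  have h : ∃ t, (nxt F)^[t + 1] j = j := by
    obtain ⟨s, hs⟩ := iter_of_rtg hF (hreach (nxt F j))
    refine ⟨s, ?_⟩
    rw [Function.iterate_succ_apply]
    exact hs
  rw [cpred, dif_pos h]
  constructor
  · have h2 := Nat.find_spec h
    rw [Function.iterate_succ_apply'] at h2
    exact h2
  · exact ⟨Nat.find h, rfl⟩

lemma erase_isSpanTree {G : Digraph m} (hv : G.verts = Finset.univ)
    {F : Finset (Fin m × Fin m)} (hFE : F ⊆ G.edges)
    (hF : ∀ v : Fin m, ∃! k, (v, k) ∈ F)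
    {r : Fin m} (hr : ∀ v : Fin m, ∃ N, (nxt F)^[N] v = r) :
    G.IsSpanTree r (F.erase (r, nxt F r)) := by
  have hm' : ∀ v : Fin m, (v, nxt F v) ∈ F := nxt_mem' hF
  refine ⟨(Finset.erase_subset _ _).trans hFE, ?_, ?_, ?_⟩
  · intro v _ hvr
    refine ⟨nxt F v, Finset.mem_erase.mpr
      ⟨fun he => hvr (congrArg Prod.fst he), hm' v⟩, ?_⟩
    intro k hk
    exact (nxt_eq hF (Finset.mem_erase.mp hk).2).symm
  · intro k hk
    have h2 := (Finset.mem_erase.mp hk).2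
    have h3 := nxt_eq hF h2
    exact (Finset.mem_erase.mp hk).1 (by rw [h3])
  · intro v _
    exact rtg_erase hm' (nxt F r) (hr v)

lemma insert_props {G : Digraph m} (hv : G.verts = Finset.univ)
    {T : Finset (Fin m × Fin m)} {r k : Fin m} (hT : G.IsSpanTree r T) :
    (∀ v : Fin m, ∃! l, (v, l) ∈ insert (r, k) T) ∧
      ∀ v : Fin m, Relation.ReflTransGen (fun a c => (a, c) ∈ insert (r, k) T) v r := by
  obtain ⟨hTE, huniq, hnoout, hreach⟩ := hT
  constructor
  · intro v
    by_cases hvr : v = r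
    · subst hvr
      refine ⟨k, Finset.mem_insert_self _ _, ?_⟩
      intro l hl
      rcases Finset.mem_insert.mp hl with h | h
      · exact congrArg Prod.snd h
      · exact absurd h (hnoout l)
    · obtain ⟨l, hl, hu⟩ := huniq v (by rw [hv]; exact Finset.mem_univ v) hvr
      refine ⟨l, Finset.mem_insert_of_mem hl, ?_⟩
      intro l' hl'
      rcases Finset.mem_insert.mp hl' with h | h
      · exact absurd (congrArg Prod.fst h) hvr
      · exact hu l' h
  · intro v
    exact Relation.ReflTransGen.mono (fun (a c : Fin m) (h : (a, c) ∈ T) => Finset.mem_insert_of_mem h) _ _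
      (hreach v (by rw [hv]; exact Finset.mem_univ v))

lemma claimA (G : Digraph m) (hv : G.verts = Finset.univ)
    (b : Fin m × Fin m → ℝ) (hb0 : ∀ e ∉ G.edges, b e = 0) (j : Fin m) :
    ∑ i, G.price i b * b (i, j) =
      ∑ F ∈ G.edges.powerset.filter (fun F =>
          (∀ v : Fin m, ∃! k, (v, k) ∈ F) ∧
          ∀ v : Fin m, Relation.ReflTransGen (fun a c => (a, c) ∈ F) v j),
        ∏ e ∈ F, b e := by
  classical
  have hstep : ∑ i, G.price i b * b (i, j)
      = ∑ i ∈ Finset.univ.filter (fun i => (i, j) ∈ G.edges), G.price i b * b (i, j) :=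
    (Finset.sum_filter_of_ne (fun x _ hx => by
      by_contra h
      rw [hb0 _ h, mul_zero] at hx
      exact hx rfl)).symm
  rw [hstep]
  simp only [price, Finset.sum_mul]
  rw [← Finset.sum_sigma (Finset.univ.filter (fun i => (i, j) ∈ G.edges))
      (fun i => G.edges.powerset.filter (fun T => G.IsSpanTree i T))
      (f := fun x => (∏ e ∈ x.2, b e) * b (x.1, j))]
  refine Finset.sum_nbij' (fun x => insert (x.1, j) x.2)
    (fun F => ⟨cpred F j, F.erase (cpred F j, j)⟩) ?_ ?_ ?_ ?_ ?_
  · rintro ⟨i, T⟩ hx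
    obtain ⟨hi, hT⟩ := Finset.mem_sigma.mp hx
    have hie : (i, j) ∈ G.edges := (Finset.mem_filter.mp hi).2
    obtain ⟨hTsub, hTtree⟩ := Finset.mem_filter.mp hT
    have hTsub' : T ⊆ G.edges := Finset.mem_powerset.mp hTsub
    obtain ⟨hfun, hrch⟩ := insert_props (k := j) hv hTtree
    refine Finset.mem_filter.mpr ⟨Finset.mem_powerset.mpr ?_, hfun, ?_⟩
    · exact Finset.insert_subset hie hTsub'
    · intro v
      exact (hrch v).tail (Finset.mem_insert_self _ _)
  · intro F hF
    obtain ⟨hFsub, hfun, hrch⟩ := Finset.mem_filter.mp hF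
    have hFsub' : F ⊆ G.edges := Finset.mem_powerset.mp hFsub
    obtain ⟨hcp1, hcp2⟩ := cpred_spec hfun hrch
    have hr : ∀ v : Fin m, ∃ N, (nxt F)^[N] v = cpred F j := by
      intro v
      obtain ⟨a, ha⟩ := iter_of_rtg hfun (hrch v)
      obtain ⟨t, ht⟩ := hcp2
      exact ⟨t + a, by rw [Function.iterate_add_apply, ha, ht]⟩
    have htree := erase_isSpanTree hv hFsub' hfun hr
    rw [hcp1] at htree
    refine Finset.mem_sigma.mpr ⟨Finset.mem_filter.mpr ⟨Finset.mem_univ _, ?_⟩,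
      Finset.mem_filter.mpr ⟨Finset.mem_powerset.mpr
        ((Finset.erase_subset _ _).trans hFsub'), htree⟩⟩
    · have := nxt_mem' hfun (cpred F j)
      rw [hcp1] at this
      exact hFsub' this
  · rintro ⟨i, T⟩ hx
    obtain ⟨hi, hT⟩ := Finset.mem_sigma.mp hx
    obtain ⟨hTsub, hTtree⟩ := Finset.mem_filter.mp hT
    obtain ⟨hfun, hrch⟩ := insert_props (k := j) hv hTtree
    have hrch' : ∀ v : Fin m,
        Relation.ReflTransGen (fun a c => (a, c) ∈ insert (i, j) T) v j :=
      fun v => (hrch v).tail (Finset.mem_insert_self _ _)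
    obtain ⟨hcp1, hcp2⟩ := cpred_spec hfun hrch'
    have hcpmem : (cpred (insert (i, j) T) j, j) ∈ insert (i, j) T := by
      have := nxt_mem' hfun (cpred (insert (i, j) T) j)
      rwa [hcp1] at this
    have hji : ∃ a, (nxt (insert (i, j) T))^[a] j = i := by
      refine iter_of_rtg hfun ?_
      exact Relation.ReflTransGen.mono (fun (a c : Fin m) (h : (a, c) ∈ T) => Finset.mem_insert_of_mem h) _ _
        (hTtree.2.2.2 j (by rw [hv]; exact Finset.mem_univ j))
    have hcpi : cpred (insert (i, j) T) j = i :=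
      pred_unique hfun hcpmem (Finset.mem_insert_self _ _) hcp2 hji
    have hnotin : (i, j) ∉ T := hTtree.2.2.1 j
    simp only [hcpi, Finset.erase_insert hnotin]
  · intro F hF
    obtain ⟨hFsub, hfun, hrch⟩ := Finset.mem_filter.mp hF
    obtain ⟨hcp1, _⟩ := cpred_spec hfun hrch
    have hcpmem : (cpred F j, j) ∈ F := by
      have := nxt_mem' hfun (cpred F j)
      rwa [hcp1] at this
    exact Finset.insert_erase hcpmem
  · rintro ⟨i, T⟩ hx
    obtain ⟨hi, hT⟩ := Finset.mem_sigma.mp hx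
    have hnotin : (i, j) ∉ T := (Finset.mem_filter.mp hT).2.2.2.1 j
    rw [Finset.prod_insert hnotin, mul_comm]

lemma claimB (G : Digraph m) (hv : G.verts = Finset.univ)
    (b : Fin m × Fin m → ℝ) (hb0 : ∀ e ∉ G.edges, b e = 0) (j : Fin m) :
    G.price j b * ∑ i, b (j, i) =
      ∑ F ∈ G.edges.powerset.filter (fun F =>
          (∀ v : Fin m, ∃! k, (v, k) ∈ F) ∧
          ∀ v : Fin m, Relation.ReflTransGen (fun a c => (a, c) ∈ F) v j),
        ∏ e ∈ F, b e := by
  classical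
  have hstep : ∑ i, b (j, i)
      = ∑ i ∈ Finset.univ.filter (fun k => (j, k) ∈ G.edges), b (j, i) :=
    (Finset.sum_filter_of_ne (fun x _ hx => by
      by_contra h
      exact hx (hb0 _ h))).symm
  rw [hstep, Finset.mul_sum]
  simp only [price, Finset.sum_mul]
  rw [← Finset.sum_product' (f := fun k T => (∏ e ∈ T, b e) * b (j, k))]
  refine Finset.sum_nbij' (fun x => insert (j, x.1) x.2)
    (fun F => (nxt F j, F.erase (j, nxt F j))) ?_ ?_ ?_ ?_ ?_
  · rintro ⟨k, T⟩ hx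
    obtain ⟨hk, hT⟩ := Finset.mem_product.mp hx
    have hke : (j, k) ∈ G.edges := (Finset.mem_filter.mp hk).2
    obtain ⟨hTsub, hTtree⟩ := Finset.mem_filter.mp hT
    obtain ⟨hfun, hrch⟩ := insert_props (k := k) hv hTtree
    exact Finset.mem_filter.mpr ⟨Finset.mem_powerset.mpr
      (Finset.insert_subset hke (Finset.mem_powerset.mp hTsub)), hfun, hrch⟩
  · intro F hF
    obtain ⟨hFsub, hfun, hrch⟩ := Finset.mem_filter.mp hF
    have hFsub' : F ⊆ G.edges := Finset.mem_powerset.mp hFsub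
    have hr : ∀ v : Fin m, ∃ N, (nxt F)^[N] v = j :=
      fun v => iter_of_rtg hfun (hrch v)
    have htree := erase_isSpanTree hv hFsub' hfun hr
    refine Finset.mem_product.mpr ⟨Finset.mem_filter.mpr ⟨Finset.mem_univ _,
      hFsub' (nxt_mem' hfun j)⟩,
      Finset.mem_filter.mpr ⟨Finset.mem_powerset.mpr
        ((Finset.erase_subset _ _).trans hFsub'), htree⟩⟩
  · rintro ⟨k, T⟩ hx
    obtain ⟨hk, hT⟩ := Finset.mem_product.mp hx
    obtain ⟨hTsub, hTtree⟩ := Finset.mem_filter.mp hT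
    obtain ⟨hfun, _⟩ := insert_props (k := k) hv hTtree
    have hnk : nxt (insert (j, k) T) j = k := nxt_eq hfun (Finset.mem_insert_self _ _)
    have hnotin : (j, k) ∉ T := hTtree.2.2.1 k
    rw [Prod.mk.injEq]
    refine ⟨hnk, ?_⟩
    rw [hnk, Finset.erase_insert hnotin]
  · intro F hF
    obtain ⟨_, hfun, _⟩ := Finset.mem_filter.mp hF
    exact Finset.insert_erase (nxt_mem' hfun j)
  · rintro ⟨k, T⟩ hx
    obtain ⟨hk, hT⟩ := Finset.mem_product.mp hx
    have hnotin : (j, k) ∉ T := (Finset.mem_filter.mp hT).2.2.2.1 k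
    rw [Finset.prod_insert hnotin, mul_comm]

lemma hasWalk_of_reaches (G : Digraph m) {v i : Fin m} (h : G.Reaches v i) :
    ∃ k, G.HasWalk v i k := by
  induction h using Relation.ReflTransGen.head_induction_on with
  | refl => exact ⟨0, fun _ => i, rfl, rfl, fun t ht => absurd ht (Nat.not_lt_zero t)⟩
  | @head a c hab _ ih =>
    obtain ⟨k, g, hg0, hgk, hge⟩ := ih
    refine ⟨k + 1, fun t => if t = 0 then a else g (t - 1), if_pos rfl, ?_, ?_⟩
    · show (if k + 1 = 0 then a else g (k + 1 - 1)) = i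
      rw [if_neg (Nat.succ_ne_zero k)]
      simpa using hgk
    · intro t ht
      match t with
      | 0 =>
        show ((if (0 : ℕ) = 0 then a else g (0 - 1)),
          (if (0 : ℕ) + 1 = 0 then a else g (0 + 1 - 1))) ∈ G.edges
        rw [if_pos rfl, if_neg (Nat.succ_ne_zero 0)]
        simpa [hg0] using hab
      | (s + 1) =>
        show ((if s + 1 = 0 then a else g (s + 1 - 1)),
          (if s + 1 + 1 = 0 then a else g (s + 1 + 1 - 1))) ∈ G.edges
        rw [if_neg (Nat.succ_ne_zero s), if_neg (Nat.succ_ne_zero (s + 1))]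
        simpa using hge s (by omega)

lemma exists_spanTree (G : Digraph m) (hv : G.verts = Finset.univ)
    (hc : G.Connected) (i : Fin m) :
    ∃ T, T ∈ G.edges.powerset.filter (fun T => G.IsSpanTree i T) := by
  classical
  have hre : ∀ v : Fin m, ∃ k, G.HasWalk v i k := fun v =>
    hasWalk_of_reaches G (hc.2 v (by rw [hv]; exact Finset.mem_univ v) i
      (by rw [hv]; exact Finset.mem_univ i))
  have dzero : ∀ v : Fin m, Nat.find (hre v) = 0 → v = i := by
    intro v h0
    obtain ⟨g, hg0, hgk, _⟩ := Nat.find_spec (hre v)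
    rw [h0] at hgk
    rw [← hg0, hgk]
  have hstep : ∀ v : Fin m, v ≠ i →
      ∃ k, (v, k) ∈ G.edges ∧ Nat.find (hre k) < Nat.find (hre v) := by
    intro v hvi
    obtain ⟨g, hg0, hgk, hge⟩ := Nat.find_spec (hre v)
    have hdv : Nat.find (hre v) ≠ 0 := fun h0 => hvi (dzero v h0)
    obtain ⟨s, hs'⟩ := Nat.exists_eq_succ_of_ne_zero hdv
    rw [hs'] at hgk hge
    refine ⟨g 1, ?_, ?_⟩
    · have h1 := hge 0 (by omega)
      rwa [hg0] at h1
    · have hw : G.HasWalk (g 1) i s :=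
        ⟨fun t => g (t + 1), rfl, hgk, fun t ht => hge (t + 1) (by omega)⟩
      have hle : Nat.find (hre (g 1)) ≤ s := Nat.find_min' (hre (g 1)) hw
      omega
  have hchoice : ∀ v : Fin m, ∃ k, v ≠ i →
      ((v, k) ∈ G.edges ∧ Nat.find (hre k) < Nat.find (hre v)) := by
    intro v
    by_cases hvi : v = i
    · exact ⟨i, fun h => absurd hvi h⟩
    · obtain ⟨k, hk⟩ := hstep v hvi
      exact ⟨k, fun _ => hk⟩
  choose f hf using hchoice
  set T : Finset (Fin m × Fin m) := (Finset.univ.erase i).image (fun v => (v, f v)) with hTdef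
  have hmemT : ∀ a c : Fin m, ((a, c) ∈ T ↔ (a ≠ i ∧ c = f a)) := by
    intro a c
    simp only [hTdef, Finset.mem_image, Finset.mem_erase, Finset.mem_univ, and_true]
    constructor
    · rintro ⟨v, hvne, heq⟩
      have h1 : v = a := congrArg Prod.fst heq
      have h2 : f v = c := congrArg Prod.snd heq
      subst h1
      exact ⟨hvne, h2.symm⟩
    · rintro ⟨hne, rfl⟩
      exact ⟨a, hne, rfl⟩
  have hTsub : T ⊆ G.edges := by
    intro e he
    obtain ⟨a, c⟩ := e
    obtain ⟨hne, rfl⟩ := (hmemT a c).mp he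
    exact (hf a hne).1
  refine ⟨T, Finset.mem_filter.mpr ⟨Finset.mem_powerset.mpr hTsub, ?_, ?_, ?_, ?_⟩⟩
  · exact hTsub
  · intro v _ hvi
    exact ⟨f v, (hmemT v (f v)).mpr ⟨hvi, rfl⟩, fun k hk => ((hmemT v k).mp hk).2⟩
  · intro k hk
    exact ((hmemT i k).mp hk).1 rfl
  · have hreach : ∀ (N : ℕ) (v : Fin m), Nat.find (hre v) ≤ N →
        Relation.ReflTransGen (fun a c => (a, c) ∈ T) v i := by
      intro N
      induction N with
      | zero =>
        intro v hv0
        have := dzero v (Nat.le_zero.mp hv0)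
        subst this
        exact Relation.ReflTransGen.refl
      | succ N ih =>
        intro v hvN
        by_cases hvi : v = i
        · subst hvi; exact Relation.ReflTransGen.refl
        · have hlt := (hf v hvi).2
          exact Relation.ReflTransGen.head ((hmemT v (f v)).mpr ⟨hvi, rfl⟩)
            (ih (f v) (by omega))
    intro v _
    exact hreach (Nat.find (hre v)) v le_rfl

end Money.Digraph
open Money Money.Digraph

/-- existence and uniqueness (up to a positive scalar) of the
positive solution of the balance equations; the spanning-tree vector is a
solution. -/
theorem stmt4 (m : ℕ) (G : Money.Digraph m)
    (hv : G.verts = Finset.univ) (hc : G.Connected)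
    (b : Fin m × Fin m → ℝ)
    (hb : ∀ e ∈ G.edges, 0 < b e) (hb0 : ∀ e ∉ G.edges, b e = 0) :
    (∀ i, 0 < G.price i b) ∧
    (∀ j, ∑ i, G.price i b * b (i, j) = G.price j b * ∑ i, b (j, i)) ∧
    (∀ p : Fin m → ℝ, (∀ i, 0 < p i) →
      (∀ j, ∑ i, p i * b (i, j) = p j * ∑ i, b (j, i)) →
      ∃ c : ℝ, 0 < c ∧ ∀ i, p i = c * G.price i b) := by

  classical
  have hpos : ∀ i, 0 < G.price i b := by
    intro i
    obtain ⟨T, hT⟩ := exists_spanTree G hv hc i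
    refine Finset.sum_pos ?_ ⟨T, hT⟩
    intro T' hT'
    refine Finset.prod_pos ?_
    intro e he
    exact hb e (Finset.mem_powerset.mp (Finset.mem_filter.mp hT').1 he)
  have hbalance : ∀ j, ∑ i, G.price i b * b (i, j) = G.price j b * ∑ i, b (j, i) := by
    intro j
    rw [claimA G hv b hb0 j, claimB G hv b hb0 j]
  refine ⟨hpos, hbalance, ?_⟩
  intro p hp hbal
  have hne : (Finset.univ : Finset (Fin m)).Nonempty := by
    obtain ⟨v, _⟩ := hc.1
    exact ⟨v, Finset.mem_univ v⟩
  obtain ⟨i0, _, hi0⟩ := Finset.exists_min_image Finset.univ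
    (fun i => p i / G.price i b) hne
  set c := p i0 / G.price i0 b with hcdef
  have hcpos : 0 < c := div_pos (hp i0) (hpos i0)
  have hrnn : ∀ i, c * G.price i b ≤ p i := by
    intro i
    calc c * G.price i b ≤ (p i / G.price i b) * G.price i b :=
          mul_le_mul_of_nonneg_right (hi0 i (Finset.mem_univ i)) (le_of_lt (hpos i))
      _ = p i := div_mul_cancel₀ _ (ne_of_gt (hpos i))
  have hr0 : p i0 - c * G.price i0 b = 0 := by
    rw [hcdef, div_mul_cancel₀ _ (ne_of_gt (hpos i0)), sub_self]
  have hrbal : ∀ j, ∑ i, (p i - c * G.price i b) * b (i, j)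
      = (p j - c * G.price j b) * ∑ i, b (j, i) := by
    intro j
    have e1 : ∀ i : Fin m, (p i - c * G.price i b) * b (i, j)
        = p i * b (i, j) - c * (G.price i b * b (i, j)) := by intro i; ring
    simp only [e1]
    rw [Finset.sum_sub_distrib, ← Finset.mul_sum, hbal j, hbalance j]
    ring
  have hkey : ∀ k : Fin m, p k - c * G.price k b = 0 →
      ∀ a, (a, k) ∈ G.edges → p a - c * G.price a b = 0 := by
    intro k hk a hak
    have hsum := hrbal k
    rw [hk, zero_mul] at hsum
    have hnn : ∀ i ∈ (Finset.univ : Finset (Fin m)),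
        0 ≤ (p i - c * G.price i b) * b (i, k) := by
      intro i _
      refine mul_nonneg (by linarith [hrnn i]) ?_
      by_cases he : (i, k) ∈ G.edges
      · exact le_of_lt (hb _ he)
      · rw [hb0 _ he]
    have h2 := (Finset.sum_eq_zero_iff_of_nonneg hnn).mp hsum a (Finset.mem_univ a)
    rcases mul_eq_zero.mp h2 with h | h
    · exact h
    · exact absurd h (ne_of_gt (hb _ hak))
  have hall : ∀ i, p i - c * G.price i b = 0 := by
    intro i
    have hre : Relation.ReflTransGen (fun a c => (a, c) ∈ G.edges) i i0 :=
      hc.2 i (by rw [hv]; exact Finset.mem_univ i) i0 (by rw [hv]; exact Finset.mem_univ i0)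
    induction hre using Relation.ReflTransGen.head_induction_on with
    | refl => exact hr0
    | head hab _ ih => exact hkey _ ih _ hab
  exact ⟨c, hcpos, fun i => by linarith [hall i]⟩
end

section
/- If G = C ∪ P is a chorded cycle, then π(G) = 4. -/
open scoped Classical

open Money Money.Digraph


namespace ChordAux
open Relation

variable {n : ℕ}

theorem rtg_restrict {α : Type*} {r : α → α → Prop} {A : α → Prop}
    (hcl : ∀ x y, r x y → ¬ A x → ¬ A y) :
    ∀ {a b}, Relation.ReflTransGen r a b → ¬ A a →
      Relation.ReflTransGen (fun x y => r x y ∧ ¬ A x) a b := by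
  intro a b h
  induction h using Relation.ReflTransGen.head_induction_on with
  | refl => intro _; exact .refl
  | head hxy hyb ih => intro hax; exact .head ⟨hxy, hax⟩ (ih (hcl _ _ hxy hax))

theorem rtg_until {α : Type*} {r : α → α → Prop} {a b : α}
    (h : Relation.ReflTransGen r a b) :
    Relation.ReflTransGen (fun x y => r x y ∧ x ≠ b) a b := by
  induction h using Relation.ReflTransGen.head_induction_on with
  | refl => exact .refl
  | @head x c hxy hyb ih =>
    by_cases hx : x = b
    · subst hx; exact .refl
    · exact .head ⟨hxy, hx⟩ ih

theorem rtg_until_or {α : Type*} {r : α → α → Prop} {a b : α}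
    (h : Relation.ReflTransGen r a b) (s : α) :
    Relation.ReflTransGen (fun x y => r x y ∧ x ≠ b ∧ x ≠ s) a b ∨
    Relation.ReflTransGen (fun x y => r x y ∧ x ≠ b ∧ x ≠ s) a s := by
  induction h using Relation.ReflTransGen.head_induction_on with
  | refl => exact Or.inl .refl
  | @head x c hxy hyb ih =>
    by_cases hx : x = b
    · subst hx; exact Or.inl .refl
    · by_cases hs : x = s
      · subst hs; exact Or.inr .refl
      · rcases ih with h' | h'
        · exact Or.inl (.head ⟨hxy, hx, hs⟩ h')
        · exact Or.inr (.head ⟨hxy, hx, hs⟩ h')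

theorem out_unique {H : Digraph n} {v : Fin n} (h : H.outdeg v = 1) :
    ∃ w, (v, w) ∈ H.edges ∧ ∀ e ∈ H.edges, e.1 = v → e = (v, w) := by
  rw [Digraph.outdeg, Finset.card_eq_one] at h
  obtain ⟨a, ha⟩ := h
  obtain ⟨a1, a2⟩ := a
  have haf : (a1, a2) ∈ H.edges.filter (fun e => e.1 = v) := ha ▸ Finset.mem_singleton_self _
  rw [Finset.mem_filter] at haf
  obtain ⟨hmem, hv⟩ := haf
  simp only at hv
  subst hv
  refine ⟨a2, hmem, fun e he h1 => ?_⟩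
  have : e ∈ H.edges.filter (fun e => e.1 = a1) := Finset.mem_filter.mpr ⟨he, h1⟩
  rw [ha, Finset.mem_singleton] at this
  exact this

theorem no_out {H : Digraph n} {v : Fin n} (h : H.outdeg v = 0) :
    ∀ e ∈ H.edges, e.1 ≠ v := by
  rw [Digraph.outdeg, Finset.card_eq_zero] at h
  intro e he hv
  have : e ∈ H.edges.filter (fun e => e.1 = v) := Finset.mem_filter.mpr ⟨he, hv⟩
  simp [h] at this

theorem in_unique {H : Digraph n} {v : Fin n} (h : H.indeg v = 1) :
    ∃ w, (w, v) ∈ H.edges ∧ ∀ e ∈ H.edges, e.2 = v → e = (w, v) := by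
  rw [Digraph.indeg, Finset.card_eq_one] at h
  obtain ⟨a, ha⟩ := h
  obtain ⟨a1, a2⟩ := a
  have haf : (a1, a2) ∈ H.edges.filter (fun e => e.2 = v) := ha ▸ Finset.mem_singleton_self _
  rw [Finset.mem_filter] at haf
  obtain ⟨hmem, hv⟩ := haf
  simp only at hv
  subst hv
  refine ⟨a1, hmem, fun e he h1 => ?_⟩
  have : e ∈ H.edges.filter (fun e => e.2 = a2) := Finset.mem_filter.mpr ⟨he, h1⟩
  rw [ha, Finset.mem_singleton] at this
  exact this

theorem no_in {H : Digraph n} {v : Fin n} (h : H.indeg v = 0) :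
    ∀ e ∈ H.edges, e.2 ≠ v := by
  rw [Digraph.indeg, Finset.card_eq_zero] at h
  intro e he hv
  have : e ∈ H.edges.filter (fun e => e.2 = v) := Finset.mem_filter.mpr ⟨he, hv⟩
  simp [h] at this

theorem no_edge_src {H : Digraph n} {v : Fin n} (hv : v ∉ H.verts) :
    ∀ e ∈ H.edges, e.1 ≠ v := fun e he h => hv (h ▸ (H.mem_verts e he).1)

theorem no_edge_tgt {H : Digraph n} {v : Fin n} (hv : v ∉ H.verts) :
    ∀ e ∈ H.edges, e.2 ≠ v := fun e he h => hv (h ▸ (H.mem_verts e he).2)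

/-- Every spanning `i`-tree contains every edge whose source is neither `i` nor `s`,
provided every vertex other than `s` has a unique out-edge. -/
theorem claimA {G : Digraph n} {s : Fin n}
    (hout1 : ∀ v ∈ G.verts, v ≠ s → ∃ w, (v, w) ∈ G.edges ∧
      ∀ e ∈ G.edges, e.1 = v → e = (v, w))
    {i : Fin n} {T : Finset (Fin n × Fin n)} (hT : G.IsSpanTree i T)
    {e : Fin n × Fin n} (he : e ∈ G.edges) (hi : e.1 ≠ i) (hs : e.1 ≠ s) : e ∈ T := by
  obtain ⟨w, hwE, hwU⟩ := hout1 e.1 (G.mem_verts e he).1 hs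
  obtain ⟨k, hk, -⟩ := hT.2.1 e.1 (G.mem_verts e he).1 hi
  have h1 : (e.1, k) = (e.1, w) := hwU _ (hT.1 hk) rfl
  have h2 : e = (e.1, w) := hwU e he rfl
  rw [h2, ← h1]
  exact hk

theorem not_influential {G : Digraph n} {s : Fin n}
    (hout1 : ∀ v ∈ G.verts, v ≠ s → ∃ w, (v, w) ∈ G.edges ∧
      ∀ e ∈ G.edges, e.1 = v → e = (v, w))
    {i j : Fin n} {e : Fin n × Fin n} (he : e ∈ G.edges)
    (hi : e.1 ≠ i) (hj : e.1 ≠ j) (hs : e.1 ≠ s) :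
    ¬ G.Influential (G.priceRatio i j) e := by
  rintro ⟨b, b', hb, hb', hagree, hne⟩
  apply hne
  have hfact : ∀ z : Fin n, e.1 ≠ z → ∀ b0 : Fin n × Fin n → ℝ,
      G.price z b0 = b0 e *
        ∑ T ∈ G.edges.powerset.filter (fun T => G.IsSpanTree z T), ∏ e' ∈ T.erase e, b0 e' := by
    intro z hz b0
    rw [Digraph.price, Finset.mul_sum]
    refine Finset.sum_congr rfl fun T hT => ?_
    rw [Finset.mem_filter] at hT
    exact (Finset.mul_prod_erase T b0 (claimA hout1 hT.2 he hz hs)).symm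
  have hQ : ∀ z : Fin n,
      (∑ T ∈ G.edges.powerset.filter (fun T => G.IsSpanTree z T), ∏ e' ∈ T.erase e, b e') =
      ∑ T ∈ G.edges.powerset.filter (fun T => G.IsSpanTree z T), ∏ e' ∈ T.erase e, b' e' :=
    fun z => Finset.sum_congr rfl fun T _ =>
      Finset.prod_congr rfl fun e' he' => hagree e' (Finset.ne_of_mem_erase he')
  rw [Digraph.priceRatio, Digraph.priceRatio, hfact i hi b, hfact j hj b, hfact i hi b',
    hfact j hj b', hQ i, hQ j, mul_div_mul_left _ _ (ne_of_gt (hb e he)),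
    mul_div_mul_left _ _ (ne_of_gt (hb' e he))]

theorem aux_upper {G : Digraph n} {s : Fin n}
    (hout1 : ∀ v ∈ G.verts, v ≠ s → ∃ w, (v, w) ∈ G.edges ∧
      ∀ e ∈ G.edges, e.1 = v → e = (v, w))
    (hdeg2 : ∀ v ∈ G.verts, (G.edges.filter (fun e => e.1 = v)).card ≤ 2)
    (hdeg1 : ∀ v ∈ G.verts, v ≠ s → (G.edges.filter (fun e => e.1 = v)).card ≤ 1)
    (hsv : s ∈ G.verts)
    {i j : Fin n} (hi : i ∈ G.verts) (hj : j ∈ G.verts) (hij : i ≠ j) :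
    G.priceCplxPair i j ≤ 4 := by
  rw [Digraph.priceCplxPair]
  rcases eq_or_ne i s with rfl | his
  · have hsub : G.edges.filter (fun e => G.Influential (G.priceRatio i j) e) ⊆
        (G.edges.filter (fun e => e.1 = j)) ∪ (G.edges.filter (fun e => e.1 = i)) := by
      intro e he
      rw [Finset.mem_filter] at he
      by_contra hmem
      simp only [Finset.mem_union, Finset.mem_filter, not_or, not_and] at hmem
      exact not_influential hout1 he.1 (hmem.2 he.1) (hmem.1 he.1) (hmem.2 he.1) he.2
    calc (G.edges.filter (fun e => G.Influential (G.priceRatio i j) e)).card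
        ≤ ((G.edges.filter (fun e => e.1 = j)) ∪ (G.edges.filter (fun e => e.1 = i))).card :=
          Finset.card_le_card hsub
      _ ≤ (G.edges.filter (fun e => e.1 = j)).card + (G.edges.filter (fun e => e.1 = i)).card :=
          Finset.card_union_le _ _
      _ ≤ 1 + 2 := Nat.add_le_add (hdeg1 j hj (Ne.symm hij)) (hdeg2 i hi)
      _ ≤ 4 := by norm_num
  · rcases eq_or_ne j s with rfl | hjs
    · have hsub : G.edges.filter (fun e => G.Influential (G.priceRatio i j) e) ⊆
          (G.edges.filter (fun e => e.1 = i)) ∪ (G.edges.filter (fun e => e.1 = j)) := by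
        intro e he
        rw [Finset.mem_filter] at he
        by_contra hmem
        simp only [Finset.mem_union, Finset.mem_filter, not_or, not_and] at hmem
        exact not_influential hout1 he.1 (hmem.1 he.1) (hmem.2 he.1) (hmem.2 he.1) he.2
      calc (G.edges.filter (fun e => G.Influential (G.priceRatio i j) e)).card
          ≤ ((G.edges.filter (fun e => e.1 = i)) ∪ (G.edges.filter (fun e => e.1 = j))).card :=
            Finset.card_le_card hsub
        _ ≤ (G.edges.filter (fun e => e.1 = i)).card + (G.edges.filter (fun e => e.1 = j)).card :=
            Finset.card_union_le _ _
        _ ≤ 1 + 2 := Nat.add_le_add (hdeg1 i hi hij) (hdeg2 j hj)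
        _ ≤ 4 := by norm_num
    · have hsub : G.edges.filter (fun e => G.Influential (G.priceRatio i j) e) ⊆
          ((G.edges.filter (fun e => e.1 = i)) ∪ (G.edges.filter (fun e => e.1 = j))) ∪
            (G.edges.filter (fun e => e.1 = s)) := by
        intro e he
        rw [Finset.mem_filter] at he
        by_contra hmem
        simp only [Finset.mem_union, Finset.mem_filter, not_or, not_and] at hmem
        exact not_influential hout1 he.1 (hmem.1.1 he.1) (hmem.1.2 he.1) (hmem.2 he.1) he.2
      calc (G.edges.filter (fun e => G.Influential (G.priceRatio i j) e)).card
          ≤ _ := Finset.card_le_card hsub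
        _ ≤ ((G.edges.filter (fun e => e.1 = i)) ∪ (G.edges.filter (fun e => e.1 = j))).card +
              (G.edges.filter (fun e => e.1 = s)).card := Finset.card_union_le _ _
        _ ≤ ((G.edges.filter (fun e => e.1 = i)).card + (G.edges.filter (fun e => e.1 = j)).card) +
              (G.edges.filter (fun e => e.1 = s)).card :=
            Nat.add_le_add_right (Finset.card_union_le _ _) _
        _ ≤ (1 + 1) + 2 :=
            Nat.add_le_add (Nat.add_le_add (hdeg1 i hi his) (hdeg1 j hj hjs)) (hdeg2 s hsv)
        _ ≤ 4 := by norm_num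


theorem enum {G : Digraph n} {s : Fin n} {sA sB : Fin n × Fin n}
    (hsonly : ∀ e ∈ G.edges, e.1 = s → e = sA ∨ e = sB)
    (hsA1 : sA.1 = s) (hsB1 : sB.1 = s) (hAB : sA ≠ sB)
    (hout1 : ∀ v ∈ G.verts, v ≠ s → ∃ w, (v, w) ∈ G.edges ∧
      ∀ e ∈ G.edges, e.1 = v → e = (v, w))
    (hsG : s ∈ G.verts)
    {i : Fin n} {e_i : Fin n × Fin n} (his : i ≠ s)
    (hei1 : e_i.1 = i) (heiU : ∀ e ∈ G.edges, e.1 = i → e = e_i)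
    {T : Finset (Fin n × Fin n)} (hT : G.IsSpanTree i T) :
    T = G.edges \ {e_i, sA} ∨ T = G.edges \ {e_i, sB} := by
  obtain ⟨hTE, hTout, hTnoi, hTreach⟩ := hT
  have heiT : e_i ∉ T := by
    intro h
    have h2 : e_i = (i, e_i.2) := by rw [← hei1]
    exact hTnoi e_i.2 (h2 ▸ h)
  have hforced : ∀ e ∈ G.edges, e.1 ≠ i → e.1 ≠ s → e ∈ T :=
    fun e he h1 h2 => claimA hout1 ⟨hTE, hTout, hTnoi, hTreach⟩ he h1 h2
  obtain ⟨k, hk, hkU⟩ := hTout s hsG (Ne.symm his)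
  have hkE := hTE hk
  have key : ∀ sX sY : Fin n × Fin n, sX.1 = s → sY.1 = s → sX ≠ sY →
      (∀ e ∈ G.edges, e.1 = s → e = sX ∨ e = sY) → sX ∈ T → T = G.edges \ {e_i, sY} := by
    intro sX sY hX1 hY1 hXY honly hXT
    have hYT : sY ∉ T := by
      intro hmem
      have h2 : sY = (s, sY.2) := by rw [← hY1]
      have h3 : sY.2 = k := hkU sY.2 (h2 ▸ hmem)
      have h4 : sX = (s, sX.2) := by rw [← hX1]
      have h5 : sX.2 = k := hkU sX.2 (h4 ▸ hXT)
      exact hXY (by rw [h4, h2, h3, h5])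
    ext e
    simp only [Finset.mem_sdiff, Finset.mem_insert, Finset.mem_singleton]
    constructor
    · intro heT
      refine ⟨hTE heT, ?_⟩
      push_neg
      exact ⟨fun h => heiT (h ▸ heT), fun h => hYT (h ▸ heT)⟩
    · rintro ⟨heE, hne⟩
      push_neg at hne
      by_cases h1 : e.1 = i
      · exact absurd (heiU e heE h1) hne.1
      · by_cases h2 : e.1 = s
        · rcases honly e heE h2 with h | h
          · exact h ▸ hXT
          · exact absurd h hne.2
        · exact hforced e heE h1 h2
  rcases hsonly _ hkE rfl with hA | hB
  · exact Or.inr (key sA sB hsA1 hsB1 hAB hsonly (hA ▸ hk))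
  · exact Or.inl (key sB sA hsB1 hsA1 (Ne.symm hAB) (fun e he h => (hsonly e he h).symm) (hB ▸ hk))

theorem span_of_reach {G : Digraph n} {s : Fin n} {x y : Fin n × Fin n}
    (hsonly : ∀ e ∈ G.edges, e.1 = s → e = x ∨ e = y)
    (hx1 : x.1 = s) (hy : y ∈ G.edges) (hy1 : y.1 = s) (hxy : x ≠ y)
    (hout1 : ∀ v ∈ G.verts, v ≠ s → ∃ w, (v, w) ∈ G.edges ∧
      ∀ e ∈ G.edges, e.1 = v → e = (v, w))
    {z : Fin n} {e_z : Fin n × Fin n} (hzs : z ≠ s)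
    (hez1 : e_z.1 = z) (hezU : ∀ e ∈ G.edges, e.1 = z → e = e_z)
    (hreach : ∀ v ∈ G.verts,
      Relation.ReflTransGen (fun a b => (a, b) ∈ G.edges \ {e_z, x}) v z) :
    G.IsSpanTree z (G.edges \ {e_z, x}) := by
  have hmemT : ∀ e ∈ G.edges, e ≠ e_z → e ≠ x → e ∈ G.edges \ {e_z, x} := by
    intro e he h1 h2
    rw [Finset.mem_sdiff]
    exact ⟨he, by simp [h1, h2]⟩
  refine ⟨Finset.sdiff_subset, ?_, ?_, hreach⟩
  · intro j hj hjz
    by_cases hjs : j = s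
    · subst hjs
      have hyz : y ≠ e_z := fun h => hzs (by rw [← hez1, ← h, hy1])
      have hy' : (j, y.2) = y := by rw [← hy1]
      refine ⟨y.2, hy' ▸ hmemT y hy hyz (Ne.symm hxy), ?_⟩
      intro k hkT
      have hkE : (j, k) ∈ G.edges := (Finset.mem_sdiff.mp hkT).1
      rcases hsonly _ hkE rfl with h | h
      · exfalso
        have : x ∈ G.edges \ {e_z, x} := h ▸ hkT
        simp [Finset.mem_sdiff] at this
      · exact congrArg Prod.snd h
    · obtain ⟨w, hwE, hwU⟩ := hout1 j hj hjs
      have h1 : (j, w) ≠ e_z := fun h => hjz (by rw [← hez1, ← h])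
      have h2 : (j, w) ≠ x := fun h => hjs (by rw [← hx1, ← h])
      refine ⟨w, hmemT _ hwE h1 h2, ?_⟩
      intro k hkT
      have hkE : (j, k) ∈ G.edges := (Finset.mem_sdiff.mp hkT).1
      exact congrArg Prod.snd (hwU _ hkE rfl)
  · intro k hkT
    rw [Finset.mem_sdiff] at hkT
    exact hkT.2 (by simp [hezU _ hkT.1 rfl])


theorem aux_lower {C P : Digraph n} {s t : Fin n}
    (hC : C.IsCycleGraph) (hP : P.IsPathGraph s t)
    (hsC : s ∈ C.verts) (htC : t ∈ C.verts)
    (hdisj : Disjoint C.edges P.edges)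
    {i : Fin n} {sA sB e_i e_t : Fin n × Fin n}
    (his : i ≠ s) (hit : i ≠ t)
    (hsA : sA ∈ (C.union P).edges) (hsAval : sA = (s, i))
    (hsB : sB ∈ (C.union P).edges) (hsB1 : sB.1 = s) (hAB : sA ≠ sB)
    (hsonly : ∀ e ∈ (C.union P).edges, e.1 = s → e = sA ∨ e = sB)
    (hei : e_i ∈ (C.union P).edges) (hei1 : e_i.1 = i)
    (heiU : ∀ e ∈ (C.union P).edges, e.1 = i → e = e_i)
    (hetC : e_t ∈ C.edges) (het1 : e_t.1 = t)
    (hetU : ∀ e ∈ (C.union P).edges, e.1 = t → e = e_t)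
    (hini : ∀ e ∈ (C.union P).edges, e.2 = i → e = sA)
    (hout1 : ∀ v ∈ (C.union P).verts, v ≠ s → ∃ w, (v, w) ∈ (C.union P).edges ∧
      ∀ e ∈ (C.union P).edges, e.1 = v → e = (v, w)) :
    4 ≤ (C.union P).priceCplxPair i t := by
  set G := C.union P with hGdef
  have hmemE_C : ∀ e ∈ C.edges, e ∈ G.edges := fun e he =>
    Finset.mem_union_left _ he
  have hmemE_P : ∀ e ∈ P.edges, e ∈ G.edges := fun e he =>
    Finset.mem_union_right _ he
  have hst : s ≠ t := hP.1
  have hts : t ≠ s := Ne.symm hst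
  have hsG : s ∈ G.verts := Finset.mem_union_left _ hsC
  have hsA1 : sA.1 = s := by rw [hsAval]
  have het : e_t ∈ G.edges := hmemE_C _ hetC
  -- distinctness of the four special edges
  have h_sA_ei : sA ≠ e_i := fun h => his (by rw [← hei1, ← h, hsA1])
  have h_sA_et : sA ≠ e_t := fun h => hts (by rw [← het1, ← h, hsA1])
  have h_sB_ei : sB ≠ e_i := fun h => his (by rw [← hei1, ← h, hsB1])
  have h_sB_et : sB ≠ e_t := fun h => hts (by rw [← het1, ← h, hsB1])
  have h_ei_et : e_i ≠ e_t := fun h => hit (by rw [← het1, ← h, hei1])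
  have hPins : ∀ e ∈ P.edges, e.2 ≠ s := no_in hP.2.2.2.2.2.2.2
  have hCconn : ∀ a ∈ C.verts, ∀ b ∈ C.verts,
      Relation.ReflTransGen (fun x y => (x, y) ∈ C.edges) a b := hC.1.2
  have hPreachT : ∀ v ∈ P.verts,
      Relation.ReflTransGen (fun x y => (x, y) ∈ P.edges) v t :=
    fun v hv => (hP.2.2.2.1 v hv).2
  have hmemT : ∀ (d x : Fin n × Fin n), ∀ e ∈ G.edges, e ≠ d → e ≠ x →
      e ∈ G.edges \ {d, x} := by
    intro d x e he h1 h2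
    rw [Finset.mem_sdiff]
    exact ⟨he, by simp [h1, h2]⟩
  -- the spanning i-tree
  have hstep_sA : (s, i) ∈ G.edges \ {e_i, sB} :=
    hsAval ▸ hmemT e_i sB sA hsA h_sA_ei hAB
  have hreach_i_C : ∀ v ∈ C.verts,
      Relation.ReflTransGen (fun a b => (a, b) ∈ G.edges \ {e_i, sB}) v i := by
    intro v hv
    have hmono : ∀ a b : Fin n, ((a, b) ∈ C.edges ∧ a ≠ s ∧ a ≠ i) →
        (a, b) ∈ G.edges \ {e_i, sB} := by
      rintro a b ⟨habC, has, hai⟩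
      exact hmemT _ _ _ (hmemE_C _ habC) (fun h => hai (by rw [← hei1, ← h]))
        (fun h => has (by rw [← hsB1, ← h]))
    have hlast : Relation.ReflTransGen (fun a b => (a, b) ∈ G.edges \ {e_i, sB}) s i :=
      Relation.ReflTransGen.single hstep_sA
    rcases rtg_until_or (hCconn v hv s hsC) i with h1 | h1
    · exact (Relation.ReflTransGen.mono (fun a b hab => hmono a b hab) _ _ h1).trans hlast
    · exact Relation.ReflTransGen.mono (fun a b hab => hmono a b hab) _ _ h1
  have hreach_i : ∀ v ∈ G.verts,
      Relation.ReflTransGen (fun a b => (a, b) ∈ G.edges \ {e_i, sB}) v i := by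
    intro v hv
    rcases Finset.mem_union.mp hv with hvC | hvP
    · exact hreach_i_C v hvC
    · by_cases hvi : v = i
      · exact hvi ▸ Relation.ReflTransGen.refl
      · by_cases hvs : v = s
        · exact hvs ▸ Relation.ReflTransGen.single hstep_sA
        · have hcl : ∀ x y, (x, y) ∈ P.edges → ¬(x = s ∨ x = i) → ¬(y = s ∨ y = i) := by
            rintro x y hxy hx (rfl | rfl)
            · exact hPins _ hxy rfl
            · have h2 : (x, y) = sA := hini (x, y) (hmemE_P _ hxy) rfl
              exact hx (Or.inl (by rw [← hsA1, ← h2]))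
          have h1 := rtg_restrict hcl (hPreachT v hvP) (by tauto)
          have h2 : Relation.ReflTransGen (fun a b => (a, b) ∈ G.edges \ {e_i, sB}) v t := by
            refine Relation.ReflTransGen.mono ?_ _ _ h1
            rintro a b ⟨hab, has⟩
            push_neg at has
            exact hmemT _ _ _ (hmemE_P _ hab) (fun h => has.2 (by rw [← hei1, ← h]))
              (fun h => has.1 (by rw [← hsB1, ← h]))
          exact h2.trans (hreach_i_C t htC)
  have hTi_span : G.IsSpanTree i (G.edges \ {e_i, sB}) :=
    span_of_reach (fun e he h => (hsonly e he h).symm) hsB1 hsA hsA1 (Ne.symm hAB)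
      hout1 his hei1 heiU hreach_i
  have hTi_notspan : ¬ G.IsSpanTree i (G.edges \ {e_i, sA}) := by
    intro h
    rcases Relation.ReflTransGen.cases_tail (h.2.2.2 s hsG) with h1 | ⟨c, -, hc⟩
    · exact his h1
    · have hcE := (Finset.mem_sdiff.mp hc).1
      have h2 : (c, i) = sA := hini _ hcE rfl
      exact (Finset.mem_sdiff.mp hc).2 (by simp [h2])
  have filter_i : G.edges.powerset.filter (fun T => G.IsSpanTree i T) =
      {G.edges \ {e_i, sB}} := by
    ext T
    simp only [Finset.mem_filter, Finset.mem_powerset, Finset.mem_singleton]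
    constructor
    · rintro ⟨-, hT⟩
      rcases enum hsonly hsA1 hsB1 hAB hout1 hsG his hei1 heiU hT with h | h
      · exact absurd (h ▸ hT) hTi_notspan
      · exact h
    · rintro rfl
      exact ⟨Finset.sdiff_subset, hTi_span⟩
  -- the two spanning t-trees
  have treach : ∀ x y : Fin n × Fin n, ((x = sA ∧ y = sB) ∨ (x = sB ∧ y = sA)) →
      ∀ v ∈ G.verts,
        Relation.ReflTransGen (fun a b => (a, b) ∈ G.edges \ {e_t, x}) v t := by
    intro x y hxy
    obtain ⟨hxE, hx1, hyE, hy1, hxyne⟩ : x ∈ G.edges ∧ x.1 = s ∧ y ∈ G.edges ∧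
        y.1 = s ∧ x ≠ y := by
      rcases hxy with ⟨rfl, rfl⟩ | ⟨rfl, rfl⟩
      · exact ⟨hsA, hsA1, hsB, hsB1, hAB⟩
      · exact ⟨hsB, hsB1, hsA, hsA1, Ne.symm hAB⟩
    have hPavoid : ∀ p ∈ P.verts, p ≠ s →
        Relation.ReflTransGen (fun a b => (a, b) ∈ G.edges \ {e_t, x}) p t := by
      intro p hp hps
      have hcl : ∀ a b, (a, b) ∈ P.edges → ¬(a = s) → ¬(b = s) :=
        fun a b hab _ hb => hPins _ hab hb
      refine Relation.ReflTransGen.mono ?_ _ _ (rtg_restrict hcl (hPreachT p hp) hps)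
      rintro a b ⟨hab, has⟩
      refine hmemT _ _ _ (hmemE_P _ hab) ?_ ?_
      · exact fun h => (Finset.disjoint_left.mp hdisj hetC) (h ▸ hab)
      · exact fun h => has (by rw [← hx1, ← h])
    by_cases hxP : x ∈ P.edges
    · have hCv : ∀ v ∈ C.verts,
          Relation.ReflTransGen (fun a b => (a, b) ∈ G.edges \ {e_t, x}) v t := by
        intro v hv
        refine Relation.ReflTransGen.mono ?_ _ _ (rtg_until (hCconn v hv t htC))
        rintro a b ⟨hab, hat⟩
        refine hmemT _ _ _ (hmemE_C _ hab) (fun h => hat (by rw [← het1, ← h])) ?_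
        exact fun h => (Finset.disjoint_left.mp hdisj (h ▸ hab)) hxP
      intro v hv
      rcases Finset.mem_union.mp hv with hvC | hvP
      · exact hCv v hvC
      · by_cases hps : v = s
        · exact hps ▸ hCv s hsC
        · exact hPavoid v hvP hps
    · have hxC : x ∈ C.edges := (Finset.mem_union.mp hxE).resolve_right hxP
      have hyP : y ∈ P.edges := by
        rcases Finset.mem_union.mp hyE with hyC | h
        · exfalso
          apply hxyne
          obtain ⟨w, hwE, hwU⟩ := out_unique (hC.2 s hsC).1
          rw [hwU x hxC hx1, hwU y hyC hy1]
        · exact h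
      have hy2P : y.2 ∈ P.verts := (P.mem_verts y hyP).2
      have hy2s : y.2 ≠ s := fun h => (P.no_loops y hyP) (by rw [hy1, h])
      have hyT : (s, y.2) ∈ G.edges \ {e_t, x} := by
        have h2 : (s, y.2) = y := by rw [← hy1]
        rw [h2]
        exact hmemT _ _ _ hyE (fun h => hts (by rw [← het1, ← h, hy1])) (Ne.symm hxyne)
      have hst_reach :
          Relation.ReflTransGen (fun a b => (a, b) ∈ G.edges \ {e_t, x}) s t := by
        by_cases hy2t : y.2 = t
        · exact Relation.ReflTransGen.single (hy2t ▸ hyT)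
        · exact Relation.ReflTransGen.head hyT (hPavoid y.2 hy2P hy2s)
      have hCv : ∀ v ∈ C.verts,
          Relation.ReflTransGen (fun a b => (a, b) ∈ G.edges \ {e_t, x}) v t := by
        intro v hv
        have hmono : ∀ a b : Fin n, ((a, b) ∈ C.edges ∧ a ≠ t ∧ a ≠ s) →
            (a, b) ∈ G.edges \ {e_t, x} := by
          rintro a b ⟨hab, hat, has⟩
          exact hmemT _ _ _ (hmemE_C _ hab) (fun h => hat (by rw [← het1, ← h]))
            (fun h => has (by rw [← hx1, ← h]))
        rcases rtg_until_or (hCconn v hv t htC) s with h1 | h1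
        · exact Relation.ReflTransGen.mono (fun a b hab => hmono a b hab) _ _ h1
        · exact (Relation.ReflTransGen.mono (fun a b hab => hmono a b hab) _ _ h1).trans
            hst_reach
      intro v hv
      rcases Finset.mem_union.mp hv with hvC | hvP
      · exact hCv v hvC
      · by_cases hps : v = s
        · exact hps ▸ hst_reach
        · exact hPavoid v hvP hps
  have hTtA_span : G.IsSpanTree t (G.edges \ {e_t, sA}) :=
    span_of_reach hsonly hsA1 hsB hsB1 hAB hout1 hts het1 hetU
      (treach sA sB (Or.inl ⟨rfl, rfl⟩))
  have hTtB_span : G.IsSpanTree t (G.edges \ {e_t, sB}) :=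
    span_of_reach (fun e he h => (hsonly e he h).symm) hsB1 hsA hsA1 (Ne.symm hAB)
      hout1 hts het1 hetU (treach sB sA (Or.inr ⟨rfl, rfl⟩))
  have hTne : G.edges \ {e_t, sA} ≠ G.edges \ {e_t, sB} := by
    intro h
    have h1 : sB ∈ G.edges \ {e_t, sA} := hmemT _ _ _ hsB h_sB_et (Ne.symm hAB)
    rw [h, Finset.mem_sdiff] at h1
    simp at h1
  have filter_t : G.edges.powerset.filter (fun T => G.IsSpanTree t T) =
      {G.edges \ {e_t, sA}, G.edges \ {e_t, sB}} := by
    ext T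
    simp only [Finset.mem_filter, Finset.mem_powerset, Finset.mem_insert,
      Finset.mem_singleton]
    constructor
    · rintro ⟨-, hT⟩
      exact enum hsonly hsA1 hsB1 hAB hout1 hsG hts het1 hetU hT
    · rintro (rfl | rfl)
      · exact ⟨Finset.sdiff_subset, hTtA_span⟩
      · exact ⟨Finset.sdiff_subset, hTtB_span⟩
  -- weights
  set f : ℝ → ℝ → ℝ → ℝ → (Fin n × Fin n) → ℝ := fun a β γ δ e =>
    if e = sA then a else if e = sB then β else if e = e_i then γ else
      if e = e_t then δ else 1 with hfdef
  have hf_sA : ∀ a β γ δ : ℝ, f a β γ δ sA = a := by intro a β γ δ; simp [hfdef]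
  have hf_sB : ∀ a β γ δ : ℝ, f a β γ δ sB = β := by
    intro a β γ δ; simp [hfdef, Ne.symm hAB]
  have hf_ei : ∀ a β γ δ : ℝ, f a β γ δ e_i = γ := by
    intro a β γ δ; simp [hfdef, Ne.symm h_sA_ei, Ne.symm h_sB_ei]
  have hf_et : ∀ a β γ δ : ℝ, f a β γ δ e_t = δ := by
    intro a β γ δ; simp [hfdef, Ne.symm h_sA_et, Ne.symm h_sB_et, Ne.symm h_ei_et]
  have hf_other : ∀ (a β γ δ : ℝ) (e : Fin n × Fin n), e ≠ sA → e ≠ sB → e ≠ e_i →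
      e ≠ e_t → f a β γ δ e = 1 := by
    intro a β γ δ e h1 h2 h3 h4; simp [hfdef, h1, h2, h3, h4]
  have hprodgen : ∀ (a β γ δ : ℝ) (d x k1 k2 : Fin n × Fin n), k1 ≠ k2 →
      ({k1, k2} : Finset (Fin n × Fin n)) ⊆ G.edges \ {d, x} →
      (∀ e, e ≠ d → e ≠ x → e ≠ k1 → e ≠ k2 → f a β γ δ e = 1) →
      ∏ e ∈ G.edges \ {d, x}, f a β γ δ e = f a β γ δ k1 * f a β γ δ k2 := by
    intro a β γ δ d x k1 k2 hk12 hsub hone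
    rw [← Finset.prod_subset hsub ?_, Finset.prod_pair hk12]
    intro e he hne
    rw [Finset.mem_sdiff] at he
    simp only [Finset.mem_insert, Finset.mem_singleton, not_or] at hne he
    exact hone e he.2.1 he.2.2 hne.1 hne.2
  have hp1 : ∀ a β γ δ : ℝ, ∏ e ∈ G.edges \ {e_i, sB}, f a β γ δ e = a * δ := by
    intro a β γ δ
    rw [hprodgen a β γ δ e_i sB sA e_t h_sA_et ?_ ?_, hf_sA, hf_et]
    · intro e he
      rcases Finset.mem_insert.mp he with rfl | he
      · exact hmemT _ _ _ hsA h_sA_ei hAB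
      · rw [Finset.mem_singleton] at he
        subst he
        exact hmemT _ _ _ het (Ne.symm h_ei_et) (Ne.symm h_sB_et)
    · intro e h1 h2 h3 h4
      exact hf_other a β γ δ e h3 h2 h1 h4
  have hp2 : ∀ a β γ δ : ℝ, ∏ e ∈ G.edges \ {e_t, sA}, f a β γ δ e = β * γ := by
    intro a β γ δ
    rw [hprodgen a β γ δ e_t sA sB e_i h_sB_ei ?_ ?_, hf_sB, hf_ei]
    · intro e he
      rcases Finset.mem_insert.mp he with rfl | he
      · exact hmemT _ _ _ hsB h_sB_et (Ne.symm hAB)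
      · rw [Finset.mem_singleton] at he
        subst he
        exact hmemT _ _ _ hei h_ei_et (Ne.symm h_sA_ei)
    · intro e h1 h2 h3 h4
      exact hf_other a β γ δ e h2 h3 h4 h1
  have hp3 : ∀ a β γ δ : ℝ, ∏ e ∈ G.edges \ {e_t, sB}, f a β γ δ e = a * γ := by
    intro a β γ δ
    rw [hprodgen a β γ δ e_t sB sA e_i h_sA_ei ?_ ?_, hf_sA, hf_ei]
    · intro e he
      rcases Finset.mem_insert.mp he with rfl | he
      · exact hmemT _ _ _ hsA h_sA_et hAB
      · rw [Finset.mem_singleton] at he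
        subst he
        exact hmemT _ _ _ hei h_ei_et (Ne.symm h_sB_ei)
    · intro e h1 h2 h3 h4
      exact hf_other a β γ δ e h3 h2 h4 h1
  have hprice_i : ∀ a β γ δ : ℝ, G.price i (f a β γ δ) = a * δ := by
    intro a β γ δ
    rw [Digraph.price, filter_i, Finset.sum_singleton, hp1]
  have hprice_t : ∀ a β γ δ : ℝ, G.price t (f a β γ δ) = β * γ + a * γ := by
    intro a β γ δ
    rw [Digraph.price, filter_t, Finset.sum_insert (by simp [hTne]),
      Finset.sum_singleton, hp2, hp3]
  have hratio : ∀ a β γ δ : ℝ,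
      G.priceRatio i t (f a β γ δ) = (a * δ) / (β * γ + a * γ) := by
    intro a β γ δ
    rw [Digraph.priceRatio, hprice_i, hprice_t]
  have hpos : ∀ a β γ δ : ℝ, 0 < a → 0 < β → 0 < γ → 0 < δ →
      ∀ e' ∈ G.edges, 0 < f a β γ δ e' := by
    intro a β γ δ ha hb hc hd e' _
    simp only [hfdef]
    split_ifs <;> first | assumption | norm_num
  have hinf_sA : G.Influential (G.priceRatio i t) sA := by
    refine ⟨f 1 1 1 1, f 3 1 1 1, hpos 1 1 1 1 one_pos one_pos one_pos one_pos,
      hpos 3 1 1 1 (by norm_num) one_pos one_pos one_pos, ?_, ?_⟩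
    · intro e' h
      simp only [hfdef, if_neg h]
    · rw [hratio, hratio]; norm_num
  have hinf_sB : G.Influential (G.priceRatio i t) sB := by
    refine ⟨f 1 1 1 1, f 1 3 1 1, hpos 1 1 1 1 one_pos one_pos one_pos one_pos,
      hpos 1 3 1 1 one_pos (by norm_num) one_pos one_pos, ?_, ?_⟩
    · intro e' h
      by_cases h1 : e' = sA
      · simp only [hfdef, if_pos h1]
      · simp only [hfdef, if_neg h1, if_neg h]
    · rw [hratio, hratio]; norm_num
  have hinf_ei : G.Influential (G.priceRatio i t) e_i := by
    refine ⟨f 1 1 1 1, f 1 1 3 1, hpos 1 1 1 1 one_pos one_pos one_pos one_pos,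
      hpos 1 1 3 1 one_pos one_pos (by norm_num) one_pos, ?_, ?_⟩
    · intro e' h
      by_cases h1 : e' = sA
      · simp only [hfdef, if_pos h1]
      · by_cases h2 : e' = sB
        · simp only [hfdef, if_neg h1, if_pos h2]
        · simp only [hfdef, if_neg h1, if_neg h2, if_neg h]
    · rw [hratio, hratio]; norm_num
  have hinf_et : G.Influential (G.priceRatio i t) e_t := by
    refine ⟨f 1 1 1 1, f 1 1 1 3, hpos 1 1 1 1 one_pos one_pos one_pos one_pos,
      hpos 1 1 1 3 one_pos one_pos one_pos (by norm_num), ?_, ?_⟩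
    · intro e' h
      by_cases h1 : e' = sA
      · simp only [hfdef, if_pos h1]
      · by_cases h2 : e' = sB
        · simp only [hfdef, if_neg h1, if_pos h2]
        · by_cases h3 : e' = e_i
          · simp only [hfdef, if_neg h1, if_neg h2, if_pos h3]
          · simp only [hfdef, if_neg h1, if_neg h2, if_neg h3, if_neg h]
    · rw [hratio, hratio]; norm_num
  have hsubset : ({sA, sB, e_i, e_t} : Finset (Fin n × Fin n)) ⊆
      G.edges.filter (fun e => G.Influential (G.priceRatio i t) e) := by
    intro e he
    rw [Finset.mem_filter]
    rcases Finset.mem_insert.mp he with rfl | he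
    · exact ⟨hsA, hinf_sA⟩
    rcases Finset.mem_insert.mp he with rfl | he
    · exact ⟨hsB, hinf_sB⟩
    rcases Finset.mem_insert.mp he with rfl | he
    · exact ⟨hei, hinf_ei⟩
    rw [Finset.mem_singleton] at he
    subst he
    exact ⟨het, hinf_et⟩
  have hcard : ({sA, sB, e_i, e_t} : Finset (Fin n × Fin n)).card = 4 := by
    rw [Finset.card_insert_of_notMem (by simp [hAB, h_sA_ei, h_sA_et]),
      Finset.card_insert_of_notMem (by simp [h_sB_ei, h_sB_et]),
      Finset.card_insert_of_notMem (by simp [h_ei_et]), Finset.card_singleton]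
  calc (4 : ℕ) = ({sA, sB, e_i, e_t} : Finset (Fin n × Fin n)).card := hcard.symm
    _ ≤ _ := Finset.card_le_card hsubset

theorem pair_le_sup {G : Digraph n} {p : Fin n × Fin n}
    (h : p ∈ ((G.verts ×ˢ G.verts).filter fun p => p.1 ≠ p.2)) :
    G.priceCplxPair p.1 p.2 ≤ G.priceComplexity := by
  rw [Digraph.priceComplexity]
  exact Finset.le_sup (f := fun q : Fin n × Fin n => G.priceCplxPair q.1 q.2) h


end ChordAux

open ChordAux

/-- a chorded cycle has `π(G) = 4`. -/
theorem stmt6 {n : ℕ} (G : Money.Digraph n) (hG : G.IsChordedCycle) :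
    G.priceComplexity = 4 := by
  obtain ⟨C, P, s, t, hC, hP, hsC, htC, hint, hdisj, rfl⟩ := hG
  have hst : s ≠ t := hP.1
  have hsP : s ∈ P.verts := hP.2.1
  have hPC : ∀ v, v ∈ P.verts → v ∈ C.verts → v = s ∨ v = t := by
    intro v h1 h2
    have hm : v ∈ P.verts ∩ C.verts := Finset.mem_inter.mpr ⟨h1, h2⟩
    rw [hint] at hm
    simpa using hm
  obtain ⟨c, hcC, hcU⟩ := out_unique (hC.2 s hsC).1
  obtain ⟨q, hqP, hqU⟩ := out_unique (hP.2.2.2.2.1 s hsP hst)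
  have hqs : q ≠ s := Ne.symm (P.no_loops _ hqP)
  have hcs : c ≠ s := Ne.symm (C.no_loops _ hcC)
  have hcverts : c ∈ C.verts := (C.mem_verts _ hcC).2
  have hqvertsP : q ∈ P.verts := (P.mem_verts _ hqP).2
  have hccq : c ≠ q := by
    intro h
    subst h
    rcases hPC c (P.mem_verts _ hqP).2 hcverts with rfl | rfl
    · exact hcs rfl
    · exact (Finset.disjoint_left.mp hdisj hcC) hqP
  have hsG : s ∈ (C.union P).verts := Finset.mem_union_left _ hsC
  have htG : t ∈ (C.union P).verts := Finset.mem_union_left _ htC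
  have hsonly : ∀ e ∈ (C.union P).edges, e.1 = s → e = (s, c) ∨ e = (s, q) := by
    intro e he h1
    rcases Finset.mem_union.mp he with h | h
    · exact Or.inl (hcU e h h1)
    · exact Or.inr (hqU e h h1)
  have hout1 : ∀ v ∈ (C.union P).verts, v ≠ s → ∃ w, (v, w) ∈ (C.union P).edges ∧
      ∀ e ∈ (C.union P).edges, e.1 = v → e = (v, w) := by
    intro v hv hvs
    by_cases hvC : v ∈ C.verts
    · obtain ⟨w, hwC, hwU⟩ := out_unique (hC.2 v hvC).1
      refine ⟨w, Finset.mem_union_left _ hwC, fun e he h1 => ?_⟩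
      rcases Finset.mem_union.mp he with h | h
      · exact hwU e h h1
      · exfalso
        have hvP' : v ∈ P.verts := h1 ▸ (P.mem_verts e h).1
        rcases hPC v hvP' hvC with rfl | rfl
        · exact hvs rfl
        · exact no_out hP.2.2.2.2.2.1 e h h1
    · have hvP : v ∈ P.verts := (Finset.mem_union.mp hv).resolve_left hvC
      have hvt : v ≠ t := fun h => hvC (h ▸ htC)
      obtain ⟨w, hwP, hwU⟩ := out_unique (hP.2.2.2.2.1 v hvP hvt)
      refine ⟨w, Finset.mem_union_right _ hwP, fun e he h1 => ?_⟩
      rcases Finset.mem_union.mp he with h | h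
      · exact absurd (h1 ▸ (C.mem_verts e h).1) hvC
      · exact hwU e h h1
  have hdeg1 : ∀ v ∈ (C.union P).verts, v ≠ s →
      ((C.union P).edges.filter (fun e => e.1 = v)).card ≤ 1 := by
    intro v hv hvs
    obtain ⟨w, hwE, hwU⟩ := hout1 v hv hvs
    refine Finset.card_le_one.mpr fun e1 h1 e2 h2 => ?_
    rw [Finset.mem_filter] at h1 h2
    rw [hwU e1 h1.1 h1.2, hwU e2 h2.1 h2.2]
  have hdeg2 : ∀ v ∈ (C.union P).verts,
      ((C.union P).edges.filter (fun e => e.1 = v)).card ≤ 2 := by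
    intro v hv
    by_cases hvs : v = s
    · subst hvs
      have hsub2 : (C.union P).edges.filter (fun e => e.1 = v) ⊆ {(v, c), (v, q)} := by
        intro e he
        rw [Finset.mem_filter] at he
        rcases hsonly e he.1 he.2 with h | h <;> simp [h]
      refine (Finset.card_le_card hsub2).trans ?_
      refine (Finset.card_insert_le _ _).trans ?_
      simp
    · exact (hdeg1 v hv hvs).trans (by norm_num)
  obtain ⟨tc, htcC, htcU⟩ := out_unique (hC.2 t htC).1
  have hetU_G : ∀ e ∈ (C.union P).edges, e.1 = t → e = (t, tc) := by
    intro e he h1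
    rcases Finset.mem_union.mp he with h | h
    · exact htcU e h h1
    · exact absurd h1 (no_out hP.2.2.2.2.2.1 e h)
  rw [Digraph.priceComplexity]
  refine le_antisymm (Finset.sup_le ?_) ?_
  · rintro ⟨a, b⟩ hab
    rw [Finset.mem_filter, Finset.mem_product] at hab
    exact aux_upper hout1 hdeg2 hdeg1 hsG hab.1.1 hab.1.2 hab.2
  · by_cases hqt : q = t
    · -- chord goes directly s → t; use i = c (successor of s on the cycle)
      subst hqt
      have hit : c ≠ q := hccq
      obtain ⟨w, hwE, hwU⟩ := hout1 c (Finset.mem_union_left _ hcverts) hcs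
      have hini : ∀ e ∈ (C.union P).edges, e.2 = c → e = (s, c) := by
        intro e he h1
        rcases Finset.mem_union.mp he with h | h
        · obtain ⟨w', hw'C, hw'U⟩ := in_unique (hC.2 c hcverts).2
          exact (hw'U e h h1).trans (hw'U (s, c) hcC rfl).symm
        · exfalso
          have hcP : c ∈ P.verts := h1 ▸ (P.mem_verts e h).2
          rcases hPC c hcP hcverts with rfl | rfl
          · exact hcs rfl
          · exact hit rfl
      have h4 : 4 ≤ (C.union P).priceCplxPair c q :=
        aux_lower hC hP hsC htC hdisj hcs hit
          (Finset.mem_union_left _ hcC) rfl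
          (Finset.mem_union_right _ hqP) rfl
          (fun h => hit (congrArg Prod.snd h))
          hsonly hwE rfl hwU htcC rfl hetU_G hini hout1
      have hmem : ((c, q) : Fin n × Fin n) ∈
          (((C.union P).verts ×ˢ (C.union P).verts).filter fun p => p.1 ≠ p.2) := by
        rw [Finset.mem_filter, Finset.mem_product]
        exact ⟨⟨Finset.mem_union_left _ hcverts, htG⟩, hit⟩
      exact h4.trans (pair_le_sup (p := (c, q)) hmem)
    · -- chord has an interior vertex; use i = q (successor of s on the chord)
      have hqC : q ∉ C.verts := by
        intro h
        rcases hPC q hqvertsP h with rfl | rfl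
        · exact hqs rfl
        · exact hqt rfl
      obtain ⟨w, hwE, hwU⟩ := hout1 q (Finset.mem_union_right _ hqvertsP) hqs
      have hini : ∀ e ∈ (C.union P).edges, e.2 = q → e = (s, q) := by
        intro e he h1
        rcases Finset.mem_union.mp he with h | h
        · exact absurd (h1 ▸ (C.mem_verts e h).2) hqC
        · obtain ⟨w', hw'P, hw'U⟩ := in_unique (hP.2.2.2.2.2.2.1 q hqvertsP hqs)
          exact (hw'U e h h1).trans (hw'U (s, q) hqP rfl).symm
      have h4 : 4 ≤ (C.union P).priceCplxPair q t :=
        aux_lower hC hP hsC htC hdisj hqs hqt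
          (Finset.mem_union_right _ hqP) rfl
          (Finset.mem_union_left _ hcC) rfl
          (fun h => hccq (congrArg Prod.snd h).symm)
          (fun e he h => (hsonly e he h).symm)
          hwE rfl hwU htcC rfl hetU_G hini hout1
      have hmem : ((q, t) : Fin n × Fin n) ∈
          (((C.union P).verts ×ˢ (C.union P).verts).filter fun p => p.1 ≠ p.2) := by
        rw [Finset.mem_filter, Finset.mem_product]
        exact ⟨⟨Finset.mem_union_right _ hqvertsP, htG⟩, hqt⟩
      exact h4.trans (pair_le_sup (p := (q, t)) hmem)
end

section
/- If G is a k-rose with k ≥ 2, then π(G) = 4. -/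
open scoped Classical

open Money Money.Digraph

namespace RoseProof

open Finset

variable {n : ℕ}

lemma out_unique {D : Money.Digraph n} {v : Fin n} (h : D.outdeg v = 1) :
    ∃! w, (v, w) ∈ D.edges := by
  obtain ⟨a, ha⟩ := Finset.card_eq_one.mp h
  have hmem : a ∈ D.edges.filter (fun e => e.1 = v) := by
    rw [ha]; exact Finset.mem_singleton_self a
  rw [Finset.mem_filter] at hmem
  refine ⟨a.2, ?_, ?_⟩
  · show (v, a.2) ∈ D.edges
    rw [show ((v, a.2) : Fin n × Fin n) = a from Prod.ext hmem.2.symm rfl]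
    exact hmem.1
  · intro w hw
    have h2 : ((v, w) : Fin n × Fin n) ∈ D.edges.filter (fun e => e.1 = v) :=
      Finset.mem_filter.mpr ⟨hw, rfl⟩
    rw [ha, Finset.mem_singleton] at h2
    exact congrArg Prod.snd h2

lemma reach_avoid {α : Type*} {r : α → α → Prop} {i v : α}
    (h : Relation.ReflTransGen r v i) :
    Relation.ReflTransGen (fun a b => r a b ∧ a ≠ i) v i := by
  induction h using Relation.ReflTransGen.head_induction_on with
  | refl => exact Relation.ReflTransGen.refl
  | head hab hbi ih =>
      rename_i a b
      by_cases hai : a = i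
      · subst hai; exact Relation.ReflTransGen.refl
      · exact Relation.ReflTransGen.head ⟨hab, hai⟩ ih

/-- The unique spanning `i`-tree of a rose, where `Cl` is the cycle containing `i`. -/
def roseTree (G Cl : Money.Digraph n) (i c : Fin n) : Finset (Fin n × Fin n) :=
  G.edges.filter fun e => e.1 ≠ i ∧ (e.1 = c → e ∈ Cl.edges)

section Rose

variable {k : ℕ} {G : Money.Digraph n} {c : Fin n} {C : Fin k → Money.Digraph n}

variable (hcyc : ∀ l, (C l).IsCycleGraph) (hc : ∀ l, c ∈ (C l).verts)
  (hdisj : ∀ l m, l ≠ m → (C l).verts ∩ (C m).verts = {c})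
  (hV : G.verts = insert c (Finset.univ.biUnion fun l => (C l).verts))
  (hE : G.edges = Finset.univ.biUnion fun l => (C l).edges)

include hE in
lemma edge_sub (l : Fin k) : (C l).edges ⊆ G.edges := by
  intro e he; rw [hE]; exact Finset.mem_biUnion.mpr ⟨l, Finset.mem_univ l, he⟩

include hE in
lemma edge_cases {e : Fin n × Fin n} (he : e ∈ G.edges) : ∃ l, e ∈ (C l).edges := by
  rw [hE] at he; obtain ⟨l, -, h⟩ := Finset.mem_biUnion.mp he; exact ⟨l, h⟩

include hV in
lemma vert_cases {v : Fin n} (hv : v ∈ G.verts) : v = c ∨ ∃ l, v ∈ (C l).verts := by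
  rw [hV] at hv
  rcases Finset.mem_insert.mp hv with h | h
  · exact Or.inl h
  · obtain ⟨l, -, h⟩ := Finset.mem_biUnion.mp h; exact Or.inr ⟨l, h⟩

include hdisj in
lemma vert_disj {v : Fin n} {l m : Fin k} (h1 : v ∈ (C l).verts) (h2 : v ∈ (C m).verts)
    (hlm : l ≠ m) : v = c := by
  have : v ∈ (C l).verts ∩ (C m).verts := Finset.mem_inter.mpr ⟨h1, h2⟩
  rw [hdisj l m hlm] at this
  exact Finset.mem_singleton.mp this

include hdisj in
lemma edge_disj {e : Fin n × Fin n} {l m : Fin k} (h1 : e ∈ (C l).edges)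
    (h2 : e ∈ (C m).edges) : l = m := by
  by_contra hlm
  have hv1 := vert_disj hdisj ((C l).mem_verts e h1).1 ((C m).mem_verts e h2).1 hlm
  have hv2 := vert_disj hdisj ((C l).mem_verts e h1).2 ((C m).mem_verts e h2).2 hlm
  exact (C l).no_loops e h1 (hv1.trans hv2.symm)

include hdisj hE in
lemma Gout {v : Fin n} {l : Fin k} (hv : v ∈ (C l).verts) (hvc : v ≠ c) (w : Fin n) :
    (v, w) ∈ G.edges ↔ (v, w) ∈ (C l).edges := by
  constructor
  · intro h
    obtain ⟨m, hm⟩ := edge_cases hE h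
    by_cases hml : m = l
    · exact hml ▸ hm
    · exact absurd (vert_disj hdisj ((C m).mem_verts _ hm).1 hv (fun h' => hml h')) hvc
  · exact fun h => edge_sub hE l h

include hcyc hdisj hE in
lemma Gout_unique {v : Fin n} {l : Fin k} (hv : v ∈ (C l).verts) (hvc : v ≠ c) :
    ∃! w, (v, w) ∈ G.edges := by
  obtain ⟨w, hw, hwu⟩ := out_unique ((hcyc l).2 v hv).1
  exact ⟨w, (Gout hdisj hE hv hvc w).mpr hw,
    fun y hy => hwu y ((Gout hdisj hE hv hvc y).mp hy)⟩

include hcyc hc hdisj hV hE in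
lemma spanTree_eq_iff {i : Fin n} {l : Fin k} (hi : i ∈ (C l).verts)
    (T : Finset (Fin n × Fin n)) :
    G.IsSpanTree i T ↔ T = roseTree G (C l) i c := by
  have hcV : c ∈ G.verts := by rw [hV]; exact Finset.mem_insert_self _ _
  constructor
  · rintro ⟨hTE, huniq, hroot, hreach⟩
    -- key: any edge of T out of c lies in (C l)
    have key : ∀ x, c ≠ i → (c, x) ∈ T → (c, x) ∈ (C l).edges := by
      intro x hci hcx
      obtain ⟨m, hm⟩ := edge_cases hE (hTE hcx)
      by_cases hml : m = l
      · exact hml ▸ hm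
      · exfalso
        obtain ⟨w, hwT, hwu⟩ := huniq c hcV hci
        have hx : x = w := hwu x hcx
        have closed : ∀ v, Relation.ReflTransGen (fun a b => (a, b) ∈ T) v i →
            v ∈ (C m).verts → False := by
          intro v hv
          induction hv using Relation.ReflTransGen.head_induction_on with
          | refl =>
            intro hiM
            exact hml (by
              by_contra hml'
              exact hci (vert_disj hdisj hi hiM (fun h => hml' h.symm)).symm) |>.elim
          | head hab hbi ih =>
            rename_i a b
            intro haM
            by_cases hac : a = c
            · subst hac
              have hbw : b = w := hwu b hab
              have : x ∈ (C m).verts := ((C m).mem_verts _ hm).2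
              exact ih (by rw [hbw, ← hx]; exact this)
            · have : (a, b) ∈ (C m).edges :=
                (Gout hdisj hE haM hac b).mp (hTE hab)
              exact ih (((C m).mem_verts _ this).2)
        exact closed c (hreach c hcV) (hc m)
    ext e
    simp only [roseTree, Finset.mem_filter]
    constructor
    · intro heT
      have hei : e.1 ≠ i := by
        intro h
        exact hroot e.2 (by rw [← h]; exact heT)
      refine ⟨hTE heT, hei, ?_⟩
      intro h1c
      have hci : c ≠ i := h1c ▸ hei
      have : (c, e.2) ∈ T := by rw [← h1c]; exact heT
      have := key e.2 hci this
      rwa [show ((c, e.2) : Fin n × Fin n) = e from Prod.ext h1c.symm rfl] at this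
    · rintro ⟨heG, hei, hec⟩
      have h1V : e.1 ∈ G.verts := (G.mem_verts e heG).1
      obtain ⟨w, hwT, hwu⟩ := huniq e.1 h1V hei
      by_cases h1c : e.1 = c
      · have hci : c ≠ i := h1c ▸ hei
        have hwCl : (c, w) ∈ (C l).edges := key w hci (by rw [← h1c]; exact hwT)
        have heCl : e ∈ (C l).edges := hec h1c
        obtain ⟨u, -, huu⟩ := out_unique ((hcyc l).2 c (hc l)).1
        have h2 : e.2 = u := huu e.2 (by
          show (c, e.2) ∈ (C l).edges
          rw [show ((c, e.2) : Fin n × Fin n) = e from Prod.ext h1c.symm rfl]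
          exact heCl)
        have h3 : w = u := huu w hwCl
        have : e = (e.1, w) := Prod.ext rfl (h2.trans h3.symm)
        rw [this]; exact hwT
      · obtain (h | ⟨m, hmV⟩) := vert_cases hV h1V
        · exact absurd h h1c
        obtain ⟨u, huG, huu⟩ := Gout_unique hcyc hdisj hE hmV h1c
        have h2 : e.2 = u := huu e.2 heG
        have h3 : w = u := huu w (hTE hwT)
        have : e = (e.1, w) := Prod.ext rfl (h2.trans h3.symm)
        rw [this]; exact hwT
  · rintro rfl
    refine ⟨Finset.filter_subset _ _, ?_, ?_, ?_⟩
    · intro j hjV hji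
      by_cases hjc : j = c
      · subst hjc
        obtain ⟨w, hwCl, hwu⟩ := out_unique ((hcyc l).2 j (hc l)).1
        refine ⟨w, Finset.mem_filter.mpr ⟨edge_sub hE l hwCl, hji, fun _ => hwCl⟩, ?_⟩
        intro w' hw'
        obtain ⟨-, -, himp⟩ := Finset.mem_filter.mp hw'
        exact hwu w' (himp rfl)
      · obtain (h | ⟨m, hm⟩) := vert_cases hV hjV
        · exact absurd h hjc
        obtain ⟨w, hwG, hwu⟩ := Gout_unique hcyc hdisj hE hm hjc
        exact ⟨w, Finset.mem_filter.mpr ⟨hwG, hji, fun h => absurd h hjc⟩,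
          fun w' hw' => hwu w' (Finset.mem_filter.mp hw').1⟩
    · intro k'
      simp only [roseTree, Finset.mem_filter]
      rintro ⟨-, h, -⟩
      exact h rfl
    · have reachCl : ∀ u ∈ (C l).verts,
          Relation.ReflTransGen (fun a b => (a, b) ∈ roseTree G (C l) i c) u i := by
        intro u hu
        have hr : (C l).Reaches u i := (hcyc l).1.2 u hu i hi
        refine Relation.ReflTransGen.mono ?_ _ _ (reach_avoid hr)
        rintro a b ⟨hab, hai⟩
        exact Finset.mem_filter.mpr ⟨edge_sub hE l hab, hai, fun _ => hab⟩
      intro v hvV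
      by_cases hvl : v ∈ (C l).verts
      · exact reachCl v hvl
      · have hvc : v ≠ c := fun h => hvl (h ▸ hc l)
        obtain (h | ⟨m, hm⟩) := vert_cases hV hvV
        · exact absurd h hvc
        have hml : m ≠ l := fun h => hvl (h ▸ hm)
        have hr : (C m).Reaches v c := (hcyc m).1.2 v hm c (hc m)
        have h1 : Relation.ReflTransGen
            (fun a b => (a, b) ∈ roseTree G (C l) i c) v c := by
          refine Relation.ReflTransGen.mono ?_ _ _ (reach_avoid hr)
          rintro a b ⟨hab, hac⟩
          have haM : a ∈ (C m).verts := ((C m).mem_verts _ hab).1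
          have hai : a ≠ i := by
            intro h
            subst h
            exact hac (vert_disj hdisj haM hi hml)
          exact Finset.mem_filter.mpr ⟨edge_sub hE m hab, hai, fun h => absurd h hac⟩
        exact h1.trans (reachCl c (hc l))

include hcyc hc hdisj hV hE in
lemma price_eq {i : Fin n} {l : Fin k} (hi : i ∈ (C l).verts) (b : Fin n × Fin n → ℝ) :
    G.price i b = ∏ e ∈ roseTree G (C l) i c, b e := by
  unfold Money.Digraph.price
  have hfil : G.edges.powerset.filter (fun T => G.IsSpanTree i T) = {roseTree G (C l) i c} := by
    ext T
    simp only [Finset.mem_filter, Finset.mem_powerset, Finset.mem_singleton]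
    constructor
    · rintro ⟨-, h⟩; exact (spanTree_eq_iff hcyc hc hdisj hV hE hi T).mp h
    · rintro rfl
      exact ⟨Finset.filter_subset _ _,
        (spanTree_eq_iff hcyc hc hdisj hV hE hi _).mpr rfl⟩
  rw [hfil, Finset.sum_singleton]

end Rose

lemma influential_iff {G : Money.Digraph n} {i j : Fin n} {Ti Tj : Finset (Fin n × Fin n)}
    (hpi : ∀ b, G.price i b = ∏ e ∈ Ti, b e)
    (hpj : ∀ b, G.price j b = ∏ e ∈ Tj, b e)
    {e : Fin n × Fin n} (he : e ∈ G.edges) :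
    G.Influential (G.priceRatio i j) e ↔ ((e ∈ Ti ∧ e ∉ Tj) ∨ (e ∉ Ti ∧ e ∈ Tj)) := by
  constructor
  · rintro ⟨b, b', hb, hb', hagree, hne⟩
    by_contra hmem
    apply hne
    unfold Money.Digraph.priceRatio
    rw [hpi, hpi, hpj, hpj]
    by_cases hti : e ∈ Ti <;> by_cases htj : e ∈ Tj
    · have hA : ∏ x ∈ Ti.erase e, b x = ∏ x ∈ Ti.erase e, b' x :=
        Finset.prod_congr rfl (fun x hx => hagree x (Finset.ne_of_mem_erase hx))
      have hB : ∏ x ∈ Tj.erase e, b x = ∏ x ∈ Tj.erase e, b' x :=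
        Finset.prod_congr rfl (fun x hx => hagree x (Finset.ne_of_mem_erase hx))
      rw [← Finset.mul_prod_erase _ b hti, ← Finset.mul_prod_erase _ b htj,
        ← Finset.mul_prod_erase _ b' hti, ← Finset.mul_prod_erase _ b' htj, hA, hB,
        mul_div_mul_left _ _ (ne_of_gt (hb e he)),
        mul_div_mul_left _ _ (ne_of_gt (hb' e he))]
    · exact absurd (Or.inl ⟨hti, htj⟩) hmem
    · exact absurd (Or.inr ⟨hti, htj⟩) hmem
    · have hA : ∏ x ∈ Ti, b x = ∏ x ∈ Ti, b' x :=
        Finset.prod_congr rfl (fun x hx => hagree x (fun h => hti (h ▸ hx)))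
      have hB : ∏ x ∈ Tj, b x = ∏ x ∈ Tj, b' x :=
        Finset.prod_congr rfl (fun x hx => hagree x (fun h => htj (h ▸ hx)))
      rw [hA, hB]
  · intro h
    refine ⟨(fun _ => 1), (fun e' => if e' = e then 2 else 1), fun _ _ => one_pos,
      fun e' _ => by by_cases h' : e' = e <;> simp [h'], fun e' h' => by simp [h'], ?_⟩
    unfold Money.Digraph.priceRatio
    rw [hpi, hpi, hpj, hpj]
    have pb : ∀ (S : Finset (Fin n × Fin n)), (∏ x ∈ S, (1 : ℝ)) = 1 :=
      fun S => Finset.prod_const_one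
    have pb' : ∀ (S : Finset (Fin n × Fin n)),
        (∏ x ∈ S, if x = e then (2 : ℝ) else 1) = if e ∈ S then 2 else 1 :=
      fun S => Finset.prod_ite_eq' S e (fun _ => 2)
    rcases h with ⟨h1, h2⟩ | ⟨h1, h2⟩ <;> rw [pb, pb, pb', pb'] <;>
      simp [h1, h2]

lemma cplx_eq {G : Money.Digraph n} {i j : Fin n} {Ti Tj : Finset (Fin n × Fin n)}
    (hpi : ∀ b, G.price i b = ∏ e ∈ Ti, b e)
    (hpj : ∀ b, G.price j b = ∏ e ∈ Tj, b e)
    (hTi : Ti ⊆ G.edges) (hTj : Tj ⊆ G.edges) :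
    G.priceCplxPair i j = ((Ti \ Tj) ∪ (Tj \ Ti)).card := by
  unfold Money.Digraph.priceCplxPair
  congr 1
  ext e
  simp only [Finset.mem_filter, Finset.mem_union, Finset.mem_sdiff]
  constructor
  · rintro ⟨heG, hinf⟩
    exact ((influential_iff hpi hpj heG).mp hinf).imp id And.symm
  · intro h
    have heG : e ∈ G.edges := by
      rcases h with h | h
      · exact hTi h.1
      · exact hTj h.1
    exact ⟨heG, (influential_iff hpi hpj heG).mpr (h.imp id And.symm)⟩

end RoseProof

namespace RoseProof

section Rose2

variable {n : ℕ} {k : ℕ} {G : Money.Digraph n} {c : Fin n} {C : Fin k → Money.Digraph n}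

variable (hcyc : ∀ l, (C l).IsCycleGraph) (hc : ∀ l, c ∈ (C l).verts)
  (hdisj : ∀ l m, l ≠ m → (C l).verts ∩ (C m).verts = {c})
  (hE : G.edges = Finset.univ.biUnion fun l => (C l).edges)

include hcyc hc hdisj hE in
lemma sdiff_card_le {i j : Fin n} {li lj : Fin k} (hi : i ∈ (C li).verts)
    (hj : j ∈ (C lj).verts) :
    ((roseTree G (C li) i c) \ (roseTree G (C lj) j c)).card ≤ 2 := by
  obtain ⟨x, hx, hxu⟩ := out_unique ((hcyc li).2 c (hc li)).1
  by_cases hjc : j = c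
  · subst hjc
    have hsub : roseTree G (C li) i j \ roseTree G (C lj) j j ⊆ {(j, x)} := by
      intro e he
      rw [Finset.mem_sdiff] at he
      obtain ⟨hin, hout⟩ := he
      rw [roseTree, Finset.mem_filter] at hin
      obtain ⟨heG, hei, heci⟩ := hin
      rw [Finset.mem_singleton]
      by_cases h2 : e.1 = j
      · refine Prod.ext h2 (hxu e.2 ?_)
        show (j, e.2) ∈ (C li).edges
        rw [show ((j, e.2) : Fin n × Fin n) = e from Prod.ext h2.symm rfl]
        exact heci h2
      · exact absurd (Finset.mem_filter.mpr ⟨heG, h2, fun h => absurd h h2⟩) hout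
    exact (Finset.card_le_card hsub).trans (by simp)
  · obtain ⟨w, hwG, hwu⟩ := Gout_unique hcyc hdisj hE hj hjc
    have hsub : roseTree G (C li) i c \ roseTree G (C lj) j c ⊆ {(j, w), (c, x)} := by
      intro e he
      rw [Finset.mem_sdiff] at he
      obtain ⟨hin, hout⟩ := he
      rw [roseTree, Finset.mem_filter] at hin
      obtain ⟨heG, hei, heci⟩ := hin
      rw [Finset.mem_insert, Finset.mem_singleton]
      by_cases h1 : e.1 = j
      · left
        refine Prod.ext h1 (hwu e.2 ?_)
        show (j, e.2) ∈ G.edges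
        rw [show ((j, e.2) : Fin n × Fin n) = e from Prod.ext h1.symm rfl]
        exact heG
      · by_cases h2 : e.1 = c
        · right
          refine Prod.ext h2 (hxu e.2 ?_)
          show (c, e.2) ∈ (C li).edges
          rw [show ((c, e.2) : Fin n × Fin n) = e from Prod.ext h2.symm rfl]
          exact heci h2
        · exact absurd (Finset.mem_filter.mpr ⟨heG, h1, fun h => absurd h h2⟩) hout
    exact (Finset.card_le_card hsub).trans ((Finset.card_insert_le _ _).trans (by simp))

include hcyc hc hdisj hE in
lemma sdiff_eq_pair {l0 l1 : Fin k} (hl : l0 ≠ l1) {i0 i1 w1 : Fin n}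
    (h0 : (c, i0) ∈ (C l0).edges) (h1 : (c, i1) ∈ (C l1).edges)
    (hw1 : (i1, w1) ∈ (C l1).edges) :
    roseTree G (C l0) i0 c \ roseTree G (C l1) i1 c = {(i1, w1), (c, i0)} := by
  have hci0 : c ≠ i0 := (C l0).no_loops _ h0
  have hci1 : c ≠ i1 := (C l1).no_loops _ h1
  have hi0v : i0 ∈ (C l0).verts := ((C l0).mem_verts _ h0).2
  have hi1v : i1 ∈ (C l1).verts := ((C l1).mem_verts _ h1).2
  have hii : i1 ≠ i0 := by
    intro h
    have h2 : i1 ∈ (C l0).verts := by rw [h]; exact hi0v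
    exact hci1 (vert_disj hdisj h2 hi1v hl).symm
  ext e
  rw [Finset.mem_sdiff, Finset.mem_insert, Finset.mem_singleton]
  constructor
  · rintro ⟨hin, hout⟩
    rw [roseTree, Finset.mem_filter] at hin
    obtain ⟨heG, hei, heci⟩ := hin
    by_cases hA : e.1 = i1
    · left
      obtain ⟨u, hu, huu⟩ := out_unique ((hcyc l1).2 i1 hi1v).1
      have hw1u : w1 = u := huu w1 hw1
      have he' : (i1, e.2) ∈ G.edges := by
        rw [show ((i1, e.2) : Fin n × Fin n) = e from Prod.ext hA.symm rfl]
        exact heG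
      have he2 : e.2 = u :=
        huu e.2 ((Gout hdisj hE hi1v (fun h => hci1 h.symm) e.2).mp he')
      exact Prod.ext hA (he2.trans hw1u.symm)
    · by_cases hB : e.1 = c
      · right
        obtain ⟨u, hu, huu⟩ := out_unique ((hcyc l0).2 c (hc l0)).1
        have hi0u : i0 = u := huu i0 h0
        have he2 : e.2 = u := by
          refine huu e.2 ?_
          show (c, e.2) ∈ (C l0).edges
          rw [show ((c, e.2) : Fin n × Fin n) = e from Prod.ext hB.symm rfl]
          exact heci hB
        exact Prod.ext hB (he2.trans hi0u.symm)
      · exact absurd (Finset.mem_filter.mpr ⟨heG, hA, fun h => absurd h hB⟩) hout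
  · rintro (rfl | rfl)
    · refine ⟨Finset.mem_filter.mpr ⟨edge_sub hE l1 hw1, hii, fun h => absurd h.symm hci1⟩, ?_⟩
      intro hmem
      exact (Finset.mem_filter.mp hmem).2.1 rfl
    · refine ⟨Finset.mem_filter.mpr ⟨edge_sub hE l0 h0, hci0, fun _ => h0⟩, ?_⟩
      intro hmem
      have h2 : ((c, i0) : Fin n × Fin n) ∈ (C l1).edges :=
        (Finset.mem_filter.mp hmem).2.2 rfl
      exact hl (edge_disj hdisj h0 h2)

end Rose2

end RoseProof


/-- a `k`-rose with `k ≥ 2` has `π(G) = 4`. -/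
theorem stmt7 {n : ℕ} (G : Money.Digraph n) (k : ℕ) (hk : 2 ≤ k)
    (hG : G.IsRose k) :
    G.priceComplexity = 4 := by
  classical
  obtain ⟨c, C, hcyc, hc, hdisj, hV, hE⟩ := hG
  have hl0 : (0 : ℕ) < k := by omega
  have hl1 : (1 : ℕ) < k := by omega
  set l0 : Fin k := ⟨0, hl0⟩ with hl0def
  set l1 : Fin k := ⟨1, hl1⟩ with hl1def
  have hl01 : l0 ≠ l1 := by
    intro h
    rw [hl0def, hl1def, Fin.mk.injEq] at h
    omega
  obtain ⟨i0, hi0, hi0u⟩ := RoseProof.out_unique ((hcyc l0).2 c (hc l0)).1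
  obtain ⟨i1, hi1, hi1u⟩ := RoseProof.out_unique ((hcyc l1).2 c (hc l1)).1
  have hi0v : i0 ∈ (C l0).verts := ((C l0).mem_verts _ hi0).2
  have hi1v : i1 ∈ (C l1).verts := ((C l1).mem_verts _ hi1).2
  have hci0 : c ≠ i0 := (C l0).no_loops _ hi0
  have hci1 : c ≠ i1 := (C l1).no_loops _ hi1
  have hi01 : i0 ≠ i1 := by
    intro h
    have h2 : i0 ∈ (C l1).verts := by rw [h]; exact hi1v
    exact hci0 (RoseProof.vert_disj hdisj h2 hi0v hl01.symm).symm
  have hvmem : ∀ {l : Fin k} {v : Fin n}, v ∈ (C l).verts → v ∈ G.verts := by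
    intro l v hvl
    rw [hV]
    exact Finset.mem_insert_of_mem (Finset.mem_biUnion.mpr ⟨l, Finset.mem_univ _, hvl⟩)
  have hvert : ∀ v ∈ G.verts, ∃ l, v ∈ (C l).verts := by
    intro v hv
    rcases RoseProof.vert_cases hV hv with rfl | h
    · exact ⟨l0, hc l0⟩
    · exact h
  have hp : ∀ (i : Fin n) (l : Fin k), i ∈ (C l).verts →
      ∀ b, G.price i b = ∏ e ∈ RoseProof.roseTree G (C l) i c, b e :=
    fun i l hi b => RoseProof.price_eq hcyc hc hdisj hV hE hi b
  unfold Money.Digraph.priceComplexity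
  apply le_antisymm
  · apply Finset.sup_le
    intro p hp'
    rw [Finset.mem_filter, Finset.mem_product] at hp'
    obtain ⟨⟨h1, h2⟩, hne⟩ := hp'
    obtain ⟨li, hli⟩ := hvert p.1 h1
    obtain ⟨lj, hlj⟩ := hvert p.2 h2
    rw [RoseProof.cplx_eq (hp p.1 li hli) (hp p.2 lj hlj)
      (Finset.filter_subset _ _) (Finset.filter_subset _ _)]
    refine (Finset.card_union_le _ _).trans ?_
    have b1 := RoseProof.sdiff_card_le hcyc hc hdisj hE hli hlj
    have b2 := RoseProof.sdiff_card_le hcyc hc hdisj hE hlj hli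
    omega
  · obtain ⟨w0, hw0, -⟩ := RoseProof.out_unique ((hcyc l0).2 i0 hi0v).1
    obtain ⟨w1, hw1, -⟩ := RoseProof.out_unique ((hcyc l1).2 i1 hi1v).1
    have h4 : G.priceCplxPair i0 i1 = 4 := by
      rw [RoseProof.cplx_eq (hp i0 l0 hi0v) (hp i1 l1 hi1v)
        (Finset.filter_subset _ _) (Finset.filter_subset _ _),
        RoseProof.sdiff_eq_pair hcyc hc hdisj hE hl01 hi0 hi1 hw1,
        RoseProof.sdiff_eq_pair hcyc hc hdisj hE hl01.symm hi1 hi0 hw0]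
      have hU : ({(i1, w1), (c, i0)} ∪ {(i0, w0), (c, i1)} : Finset (Fin n × Fin n)) =
          {(i1, w1), (c, i0), (i0, w0), (c, i1)} := by
        ext x
        simp only [Finset.mem_union, Finset.mem_insert, Finset.mem_singleton]
        tauto
      rw [hU]
      have m1 : ((i1, w1) : Fin n × Fin n) ∉
          ({(c, i0), (i0, w0), (c, i1)} : Finset (Fin n × Fin n)) := by
        simp only [Finset.mem_insert, Finset.mem_singleton, Prod.mk.injEq, not_or]
        exact ⟨fun h => hci1 h.1.symm, fun h => hi01 h.1.symm, fun h => hci1 h.1.symm⟩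
      have m2 : ((c, i0) : Fin n × Fin n) ∉
          ({(i0, w0), (c, i1)} : Finset (Fin n × Fin n)) := by
        simp only [Finset.mem_insert, Finset.mem_singleton, Prod.mk.injEq, not_or]
        exact ⟨fun h => hci0 h.1, fun h => hi01 h.2⟩
      have m3 : ((i0, w0) : Fin n × Fin n) ∉ ({(c, i1)} : Finset (Fin n × Fin n)) := by
        simp only [Finset.mem_singleton, Prod.mk.injEq, not_and]
        exact fun h _ => hci0 h.symm
      rw [Finset.card_insert_of_notMem m1, Finset.card_insert_of_notMem m2,
        Finset.card_insert_of_notMem m3, Finset.card_singleton]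
    refine le_trans ?_ (Finset.le_sup (f := fun p : Fin n × Fin n => G.priceCplxPair p.1 p.2)
      (b := ((i0, i1) : Fin n × Fin n)) ?_)
    · exact le_of_eq h4.symm
    · rw [Finset.mem_filter, Finset.mem_product]
      exact ⟨⟨hvmem hi0v, hvmem hi1v⟩, hi01⟩
end
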